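/- arXiv:1309.4821 — 5 statements merged into one kernel-verified Lean document; each statement's English description precedes it below -/
import Mathlib

section
/- Let S = (V, C, T, E) be a Monadic Equational System admitting free algebras, and let u, v : C → TA be a parallel pair of Kleisli maps. Then the following are equivalent: (1) every S-algebra (X,s) satisfies u ≡ v; (2) the free S-algebra (T_S A, τ^S_A) on A satisfies u ≡ v; (3) q^S_A ∘ u = q^S_A ∘ v : C → T_S A, where q^S_A : TA → T_S A is the quotient map. -/
open CategoryTheory MonoidalCategory Limits

universe w v₁ v₂ v₃ u₁ u₂ u₃

namespace MonEq

variable (V : Type u₁) [Category.{v₁} V] [MonoidalCategory V]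
variable (C : Type u₂) [Category.{v₂} C]

/-- An action of a monoidal category `V` on a category `C`, with coherence
isomorphisms `lam : I ⊳ c ≅ c` and `assoc : (u ⊗ v) ⊳ c ≅ u ⊳ (v ⊳ c)`. -/
structure MonAction where
  act : V ⥤ C ⥤ C
  lam : act.obj (𝟙_ V) ≅ 𝟭 C
  assoc : ∀ u v : V, act.obj (u ⊗ v) ≅ act.obj v ⋙ act.obj u
  assoc_natural :
    ∀ {u u' v v' : V} (f : u ⟶ u') (g : v ⟶ v') (c : C),
      (act.map (f ⊗ₘ g)).app c ≫ (assoc u' v').hom.app c =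
        (assoc u v).hom.app c ≫ (act.map f).app ((act.obj v).obj c) ≫
          (act.obj u').map ((act.map g).app c)
  triangle_left :
    ∀ (v : V) (c : C),
      (assoc (𝟙_ V) v).hom.app c ≫ lam.hom.app ((act.obj v).obj c) =
        (act.map (λ_ v).hom).app c
  triangle_right :
    ∀ (v : V) (c : C),
      (assoc v (𝟙_ V)).hom.app c ≫ (act.obj v).map (lam.hom.app c) =
        (act.map (ρ_ v).hom).app c
  pentagon :
    ∀ (u v w : V) (c : C),
      (act.map (α_ u v w).hom).app c ≫ (assoc u (v ⊗ w)).hom.app c ≫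
          (act.obj u).map ((assoc v w).hom.app c) =
        (assoc (u ⊗ v) w).hom.app c ≫ (assoc u v).hom.app ((act.obj w).obj c)

variable {V C}

/-- A right-closed structure on a `V`-action: each functor `(-) ⊳ c : V ⥤ C`
has a right adjoint `rhom c = C̲(c,-) : C ⥤ V`. -/
structure RightClosed (A : MonAction V C) where
  rhom : C → C ⥤ V
  adj : ∀ c : C, A.act.flip.obj c ⊣ rhom c

/-- A left-closed structure on a `V`-action: each functor `v ⊳ (-) : C ⥤ C`
has a right adjoint `lhom v = ⟦v,-⟧ : C ⥤ C`. -/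
structure LeftClosed (A : MonAction V C) where
  lhom : V → C ⥤ C
  adj : ∀ v : V, A.act.obj v ⊣ lhom v

variable {A : MonAction V C}

/-- Evaluation (counit) `ev_{a,x} : C̲(a,x) ⊳ a ⟶ x` of the right-closed structure. -/
def RightClosed.ev (R : RightClosed A) (a x : C) :
    (A.act.obj ((R.rhom a).obj x)).obj a ⟶ x :=
  (R.adj a).counit.app x

/-- Evaluation (counit) `ev_{v,x} : v ⊳ ⟦v,x⟧ ⟶ x` of the left-closed structure. -/
def LeftClosed.ev (L : LeftClosed A) (v : V) (x : C) :
    (A.act.obj v).obj ((L.lhom v).obj x) ⟶ x :=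
  (L.adj v).counit.app x

/-- Contravariant functorial action `C̲(f,x) : C̲(b,x) ⟶ C̲(a,x)` of the right-homs. -/
def RightClosed.rmap (R : RightClosed A) {a b : C} (f : a ⟶ b) (x : C) :
    (R.rhom b).obj x ⟶ (R.rhom a).obj x :=
  ((R.adj a).homEquiv _ x) ((A.act.obj ((R.rhom b).obj x)).map f ≫ R.ev b x)

/-- Contravariant functorial action `⟦h,x⟧ : ⟦w,x⟧ ⟶ ⟦v,x⟧` of the left-homs. -/
def LeftClosed.lmap (L : LeftClosed A) {v w : V} (h : v ⟶ w) (x : C) :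
    (L.lhom w).obj x ⟶ (L.lhom v).obj x :=
  ((L.adj v).homEquiv _ x) ((A.act.map h).app ((L.lhom w).obj x) ≫ L.ev w x)

variable (A) in
/-- A strong endofunctor on a `V`-action. -/
structure StrongEndo where
  F : C ⥤ C
  str : ∀ v : V, F ⋙ A.act.obj v ⟶ A.act.obj v ⋙ F
  str_natural :
    ∀ {v w : V} (h : v ⟶ w) (c : C),
      (A.act.map h).app (F.obj c) ≫ (str w).app c =
        (str v).app c ≫ F.map ((A.act.map h).app c)
  str_lam :
    ∀ c : C,
      (str (𝟙_ V)).app c ≫ F.map (A.lam.hom.app c) = A.lam.hom.app (F.obj c)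
  str_assoc :
    ∀ (u v : V) (c : C),
      (str (u ⊗ v)).app c ≫ F.map ((A.assoc u v).hom.app c) =
        (A.assoc u v).hom.app (F.obj c) ≫ (A.act.obj u).map ((str v).app c) ≫
          (str u).app ((A.act.obj v).obj c)

/-- Strong natural transformations between strong endofunctors. -/
def IsStrongHom (F G : StrongEndo A) (τ : F.F ⟶ G.F) : Prop :=
  ∀ (v : V) (c : C),
    (A.act.obj v).map (τ.app c) ≫ (G.str v).app c =
      (F.str v).app c ≫ τ.app ((A.act.obj v).obj c)

variable (A) in
/-- A strong monad on a `V`-action: a strong endofunctor with a compatible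
monad structure. -/
structure StrongMonad extends StrongEndo A where
  unit : 𝟭 C ⟶ F
  mul : F ⋙ F ⟶ F
  left_unit : ∀ c : C, unit.app (F.obj c) ≫ mul.app c = 𝟙 (F.obj c)
  right_unit : ∀ c : C, F.map (unit.app c) ≫ mul.app c = 𝟙 (F.obj c)
  mul_assoc' : ∀ c : C, F.map (mul.app c) ≫ mul.app c = mul.app (F.obj c) ≫ mul.app c
  unit_str :
    ∀ (v : V) (c : C),
      (A.act.obj v).map (unit.app c) ≫ (str v).app c = unit.app ((A.act.obj v).obj c)
  mul_str :
    ∀ (v : V) (c : C),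
      (str v).app (F.obj c) ≫ F.map ((str v).app c) ≫ mul.app ((A.act.obj v).obj c) =
        (A.act.obj v).map (mul.app c) ≫ (str v).app c

/-- The interpretation map `ι(s)_a : C̲(a,X) ⊳ T a ⟶ X` determined by a strength `σ`
and a `T`-algebra `s : T X ⟶ X`. -/
def interpMap (R : RightClosed A) (T : C ⥤ C)
    (σ : ∀ v : V, T ⋙ A.act.obj v ⟶ A.act.obj v ⋙ T)
    {X : C} (s : T.obj X ⟶ X) (a : C) :
    (A.act.obj ((R.rhom a).obj X)).obj (T.obj a) ⟶ X :=
  (σ ((R.rhom a).obj X)).app a ≫ T.map (R.ev a X) ≫ s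

/-- The interpretation `⟦t⟧_{(X,s)} : C̲(a,X) ⊳ c ⟶ X` of a Kleisli map `t : c ⟶ T a`. -/
def interp (R : RightClosed A) (T : C ⥤ C)
    (σ : ∀ v : V, T ⋙ A.act.obj v ⟶ A.act.obj v ⋙ T)
    {X : C} (s : T.obj X ⟶ X) {c a : C} (t : c ⟶ T.obj a) :
    (A.act.obj ((R.rhom a).obj X)).obj c ⟶ X :=
  (A.act.obj ((R.rhom a).obj X)).map t ≫ interpMap R T σ s a

/-- Satisfaction of an equation `u ≡ v : c ⟶ T a` by an algebra `(X,s)`. -/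
def Satisfies (R : RightClosed A) (T : C ⥤ C)
    (σ : ∀ v : V, T ⋙ A.act.obj v ⟶ A.act.obj v ⋙ T)
    {X : C} (s : T.obj X ⟶ X) {c a : C} (u v : c ⟶ T.obj a) : Prop :=
  interp R T σ s u = interp R T σ s v

/-- A `T`-equation: a parallel pair of Kleisli maps. -/
structure TEq (T : C ⥤ C) where
  coar : C
  ar : C
  lhs : coar ⟶ T.obj ar
  rhs : coar ⟶ T.obj ar

variable (A) in
/-- A Monadic Equational System: a biclosed `V`-action together with a strong
monad and a set of equations. -/
structure MES where
  R : RightClosed A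
  L : LeftClosed A
  T : StrongMonad A
  E : Set (TEq T.F)

/-- Eilenberg–Moore algebra laws for a strong monad. -/
def IsEMAlgebra (M : StrongMonad A) {X : C} (s : M.F.obj X ⟶ X) : Prop :=
  M.unit.app X ≫ s = 𝟙 X ∧ M.mul.app X ≫ s = M.F.map s ≫ s

/-- An `S`-algebra: an Eilenberg–Moore algebra satisfying all the equations. -/
def IsSAlgebra (S : MES A) {X : C} (s : S.T.F.obj X ⟶ X) : Prop :=
  IsEMAlgebra S.T s ∧ ∀ e ∈ S.E, Satisfies S.R S.T.F S.T.str s e.lhs e.rhs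

/-- Free `S`-algebras: a left adjoint (described by its universal property)
to the forgetful functor from `S`-algebras. -/
structure FreeAlgebras (S : MES A) where
  TS : C → C
  τ : ∀ X : C, S.T.F.obj (TS X) ⟶ TS X
  unit : ∀ X : C, X ⟶ TS X
  isAlg : ∀ X : C, IsSAlgebra S (τ X)
  extend : ∀ (X : C) {Y : C} (t : S.T.F.obj Y ⟶ Y), IsSAlgebra S t →
    ∀ f : X ⟶ Y, ∃! g : TS X ⟶ Y, S.T.F.map g ≫ t = τ X ≫ g ∧ unit X ≫ g = f

/-- The lifted algebra `s_v : T ⟦v,X⟧ ⟶ ⟦v,X⟧` on a left-hom. -/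
def liftAlg (L : LeftClosed A) (T : C ⥤ C)
    (σ : ∀ v : V, T ⋙ A.act.obj v ⟶ A.act.obj v ⋙ T)
    {X : C} (s : T.obj X ⟶ X) (v : V) :
    T.obj ((L.lhom v).obj X) ⟶ (L.lhom v).obj X :=
  ((L.adj v).homEquiv _ X)
    ((σ v).app ((L.lhom v).obj X) ≫ T.map (L.ev v X) ≫ s)

/-- The object part `K_X(a) = ⟦C̲(a,X),X⟧` of the double-dualization construction. -/
def Kobj (R : RightClosed A) (L : LeftClosed A) (X a : C) : C :=
  (L.lhom ((R.rhom a).obj X)).obj X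

/-- The morphism part of the double-dualization construction. -/
def Kmap (R : RightClosed A) (L : LeftClosed A) (X : C) {a b : C} (f : a ⟶ b) :
    Kobj R L X a ⟶ Kobj R L X b :=
  L.lmap (R.rmap f X) X

/-- The unit `a ⟶ K_X a` of the double-dualization monad: the transpose of the
evaluation `ev_{a,X}`. -/
def ddUnit (R : RightClosed A) (L : LeftClosed A) (X a : C) : a ⟶ Kobj R L X a :=
  ((L.adj ((R.rhom a).obj X)).homEquiv a X) (R.ev a X)

/-- The map `δ_v : v ⟶ C̲(⟦v,X⟧,X)`: the transpose of the evaluation `ev_{v,X}`. -/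
def dd (R : RightClosed A) (L : LeftClosed A) (X : C) (v : V) :
    v ⟶ (R.rhom ((L.lhom v).obj X)).obj X :=
  ((R.adj ((L.lhom v).obj X)).homEquiv v X) (L.ev v X)

/-- The multiplication `K_X (K_X a) ⟶ K_X a` of the double-dualization monad,
namely `⟦δ_{C̲(a,X)},X⟧`. -/
def ddMult (R : RightClosed A) (L : LeftClosed A) (X a : C) :
    Kobj R L X (Kobj R L X a) ⟶ Kobj R L X a :=
  L.lmap (dd R L X ((R.rhom a).obj X)) X

/-- The map `C̲(v ⊳ a, X) ⊗ v ⟶ C̲(a,X)`, transpose of `ev ∘ assoc`. -/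
def hatg (R : RightClosed A) (X : C) (v : V) (a : C) :
    ((R.rhom ((A.act.obj v).obj a)).obj X) ⊗ v ⟶ (R.rhom a).obj X :=
  ((R.adj a).homEquiv _ X)
    ((A.assoc ((R.rhom ((A.act.obj v).obj a)).obj X) v).hom.app a ≫
      R.ev ((A.act.obj v).obj a) X)

/-- The clone strength `v ⊳ ⟦C̲(a,X),Y⟧ ⟶ ⟦C̲(v ⊳ a,X),Y⟧`. -/
def cloneStr (R : RightClosed A) (L : LeftClosed A) (X Y : C) (v : V) (a : C) :
    (A.act.obj v).obj ((L.lhom ((R.rhom a).obj X)).obj Y) ⟶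
      (L.lhom ((R.rhom ((A.act.obj v).obj a)).obj X)).obj Y :=
  ((L.adj ((R.rhom ((A.act.obj v).obj a)).obj X)).homEquiv _ Y)
    ((A.assoc ((R.rhom ((A.act.obj v).obj a)).obj X) v).inv.app
        ((L.lhom ((R.rhom a).obj X)).obj Y) ≫
      (A.act.map (hatg R X v a)).app ((L.lhom ((R.rhom a).obj X)).obj Y) ≫
      L.ev ((R.rhom a).obj X) Y)

/-- The counit `ε_X : K_X X ⟶ X` of the clone adjunction at `X`. -/
def cleval (R : RightClosed A) (L : LeftClosed A) (X : C) : Kobj R L X X ⟶ X :=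
  L.lmap (((R.adj X).homEquiv (𝟙_ V) X) (A.lam.hom.app X)) X ≫
    A.lam.inv.app ((L.lhom (𝟙_ V)).obj X) ≫ L.ev (𝟙_ V) X

/-- The transpose `m(s)_a : T a ⟶ K_X a` of the interpretation map `ι(s)_a`. -/
def mOf (R : RightClosed A) (L : LeftClosed A) (T : C ⥤ C)
    (σ : ∀ v : V, T ⋙ A.act.obj v ⟶ A.act.obj v ⋙ T)
    {X : C} (s : T.obj X ⟶ X) (a : C) :
    T.obj a ⟶ Kobj R L X a :=
  ((L.adj ((R.rhom a).obj X)).homEquiv (T.obj a) X) (interpMap R T σ s a)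

/-- The identity strength on the identity functor. -/
def idStr (A : MonAction V C) (v : V) : 𝟭 C ⋙ A.act.obj v ⟶ A.act.obj v ⋙ 𝟭 C :=
  { app := fun c => 𝟙 ((A.act.obj v).obj c) }

/-- The unit of the clone monad: the clone transpose of the identity on `X`
(computed through the identity strong functor). -/
def cloneUnit (R : RightClosed A) (L : LeftClosed A) (X a : C) : a ⟶ Kobj R L X a :=
  mOf R L (𝟭 C) (idStr A) (𝟙 X) a

/-- The multiplication of the clone monad: the clone transpose of
`ε_X ∘ K_X ε_X : K_X K_X X ⟶ X` computed through the composite `K_X ∘ K_X`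
with its composite (clone) strength. -/
def cloneMult (R : RightClosed A) (L : LeftClosed A) (X a : C) :
    Kobj R L X (Kobj R L X a) ⟶ Kobj R L X a :=
  ((L.adj ((R.rhom a).obj X)).homEquiv _ X)
    (cloneStr R L X X ((R.rhom a).obj X) (Kobj R L X a) ≫
      Kmap R L X (cloneStr R L X X ((R.rhom a).obj X) a) ≫
      Kmap R L X (Kmap R L X (R.ev a X)) ≫
      Kmap R L X (cleval R L X) ≫ cleval R L X)

end MonEq

namespace MonEq


section Aux

variable {V : Type u₁} [Category.{v₁} V] [MonoidalCategory V]
variable {C : Type u₂} [Category.{v₂} C] {A : MonAction V C}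

lemma lev_transpose (L : LeftClosed A) {v : V} {c x : C} (g : c ⟶ (L.lhom v).obj x) :
    (A.act.obj v).map g ≫ L.ev v x = ((L.adj v).homEquiv c x).symm g := by
  rw [Adjunction.homEquiv_counit]; rfl

lemma lev_homEquiv (L : LeftClosed A) {v : V} {c x : C} (ψ : (A.act.obj v).obj c ⟶ x) :
    (A.act.obj v).map (((L.adj v).homEquiv c x) ψ) ≫ L.ev v x = ψ := by
  rw [lev_transpose, Equiv.symm_apply_apply]

lemma lhom_ext (L : LeftClosed A) {v : V} {c x : C} {g₁ g₂ : c ⟶ (L.lhom v).obj x}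
    (h : (A.act.obj v).map g₁ ≫ L.ev v x = (A.act.obj v).map g₂ ≫ L.ev v x) :
    g₁ = g₂ := by
  apply ((L.adj v).homEquiv c x).symm.injective
  rw [← lev_transpose, ← lev_transpose, h]

lemma rev_transpose (R : RightClosed A) {a : C} {w : V} {x : C}
    (g : w ⟶ (R.rhom a).obj x) :
    (A.act.map g).app a ≫ R.ev a x = ((R.adj a).homEquiv w x).symm g := by
  rw [Adjunction.homEquiv_counit]; rfl

lemma rev_homEquiv (R : RightClosed A) {a : C} {w : V} {x : C}
    (ψ : (A.act.obj w).obj a ⟶ x) :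
    (A.act.map (((R.adj a).homEquiv w x) ψ)).app a ≫ R.ev a x = ψ := by
  rw [rev_transpose, Equiv.symm_apply_apply]

lemma liftAlg_transpose (L : LeftClosed A) (F : C ⥤ C)
    (σ : ∀ v : V, F ⋙ A.act.obj v ⟶ A.act.obj v ⋙ F) {X : C} (s : F.obj X ⟶ X) (v : V) :
    (A.act.obj v).map (liftAlg L F σ s v) ≫ L.ev v X =
      (σ v).app ((L.lhom v).obj X) ≫ F.map (L.ev v X) ≫ s :=
  lev_homEquiv L _

lemma mOf_transpose (R : RightClosed A) (L : LeftClosed A) (F : C ⥤ C)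
    (σ : ∀ v : V, F ⋙ A.act.obj v ⟶ A.act.obj v ⋙ F) {X : C} (s : F.obj X ⟶ X) (a : C) :
    (A.act.obj ((R.rhom a).obj X)).map (mOf R L F σ s a) ≫ L.ev ((R.rhom a).obj X) X =
      interpMap R F σ s a :=
  lev_homEquiv L _

lemma liftAlg_isEM (L : LeftClosed A) (M : StrongMonad A) {X : C}
    (s : M.F.obj X ⟶ X) (hs : IsEMAlgebra M s) (v : V) :
    IsEMAlgebra M (liftAlg L M.F M.str s v) := by
  obtain ⟨hu, hm⟩ := hs
  have hstr : ∀ {c c' : C} (f : c ⟶ c'),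
      (A.act.obj v).map (M.F.map f) ≫ (M.str v).app c' =
        (M.str v).app c ≫ M.F.map ((A.act.obj v).map f) := by
    intro c c' f
    have := (M.str v).naturality f
    simpa using this
  have hmul : ∀ {c c' : C} (f : c ⟶ c'),
      M.F.map (M.F.map f) ≫ M.mul.app c' = M.mul.app c ≫ M.F.map f := by
    intro c c' f
    have := M.mul.naturality f
    simpa using this
  constructor
  · apply lhom_ext L
    simp only [CategoryTheory.Functor.map_comp, CategoryTheory.Functor.map_id,
      Category.id_comp, Category.assoc]
    rw [liftAlg_transpose]
    rw [reassoc_of% (M.unit_str v ((L.lhom v).obj X))]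
    rw [reassoc_of% (M.unit.naturality (L.ev v X)).symm]
    rw [hu, Category.comp_id]
    simp
  · apply lhom_ext L
    simp only [CategoryTheory.Functor.map_comp, Category.assoc]
    rw [liftAlg_transpose]
    rw [reassoc_of% hstr (liftAlg L M.F M.str s v)]
    rw [← M.F.map_comp_assoc, liftAlg_transpose]
    rw [← reassoc_of% (M.mul_str v ((L.lhom v).obj X))]
    rw [← reassoc_of% (hmul (L.ev v X)), hm]
    simp only [CategoryTheory.Functor.map_comp, Category.assoc]

lemma mOf_em (R : RightClosed A) (L : LeftClosed A) (M : StrongMonad A) {X : C}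
    (s : M.F.obj X ⟶ X) (hm : M.mul.app X ≫ s = M.F.map s ≫ s) (a : C) :
    M.F.map (mOf R L M.F M.str s a) ≫ liftAlg L M.F M.str s ((R.rhom a).obj X) =
      M.mul.app a ≫ mOf R L M.F M.str s a := by
  set v₀ := (R.rhom a).obj X with hv₀
  have hstr : ∀ {c c' : C} (f : c ⟶ c'),
      (A.act.obj v₀).map (M.F.map f) ≫ (M.str v₀).app c' =
        (M.str v₀).app c ≫ M.F.map ((A.act.obj v₀).map f) := by
    intro c c' f
    have := (M.str v₀).naturality f
    simpa using this
  have hmul : ∀ {c c' : C} (f : c ⟶ c'),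
      M.F.map (M.F.map f) ≫ M.mul.app c' = M.mul.app c ≫ M.F.map f := by
    intro c c' f
    have := M.mul.naturality f
    simpa using this
  apply lhom_ext L
  erw [CategoryTheory.Functor.map_comp_assoc (A.act.obj ((R.rhom a).obj X)) (M.F.map (mOf R L M.F M.str s a)),
    CategoryTheory.Functor.map_comp_assoc (A.act.obj ((R.rhom a).obj X)) (M.mul.app a)]
  erw [mOf_transpose R L M.F M.str s a, liftAlg_transpose L M.F M.str s ((R.rhom a).obj X)]
  erw [reassoc_of% hstr (c' := (L.lhom v₀).obj X) (mOf R L M.F M.str s a)]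
  erw [← M.F.map_comp_assoc ((A.act.obj v₀).map (mOf R L M.F M.str s a)), mOf_transpose R L M.F M.str s a]
  unfold interpMap
  rw [← reassoc_of% (M.mul_str v₀ a)]
  rw [← reassoc_of% (hmul (R.ev a X)), hm]
  simp only [CategoryTheory.Functor.map_comp, Category.assoc]
  rfl


/-- The comparison map `v ⊗ C̲(a,⟦v,X⟧) ⟶ C̲(a,X)`. -/
def wmap (R : RightClosed A) (L : LeftClosed A) (X : C) (v : V) (a : C) :
    v ⊗ (R.rhom a).obj ((L.lhom v).obj X) ⟶ (R.rhom a).obj X :=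
  ((R.adj a).homEquiv _ X)
    ((A.assoc v ((R.rhom a).obj ((L.lhom v).obj X))).hom.app a ≫
      (A.act.obj v).map (R.ev a ((L.lhom v).obj X)) ≫ L.ev v X)

lemma interpMap_lift (R : RightClosed A) (L : LeftClosed A) (M : StrongMonad A) {X : C}
    (s : M.F.obj X ⟶ X) (v : V) (a : C) :
    (A.act.obj v).map (interpMap R M.F M.str (liftAlg L M.F M.str s v) a) ≫ L.ev v X =
      (A.assoc v ((R.rhom a).obj ((L.lhom v).obj X))).inv.app (M.F.obj a) ≫
        (A.act.map (wmap R L X v a)).app (M.F.obj a) ≫ interpMap R M.F M.str s a := by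
  have hstr : ∀ {c c' : C} (f : c ⟶ c'),
      (A.act.obj v).map (M.F.map f) ≫ (M.str v).app c' =
        (M.str v).app c ≫ M.F.map ((A.act.obj v).map f) := by
    intro c c' f
    have := (M.str v).naturality f
    simpa using this
  unfold interpMap
  rw [reassoc_of% (M.str_natural (wmap R L X v a) a)]
  rw [← M.F.map_comp_assoc ((A.act.map (wmap R L X v a)).app a) (R.ev a X)]
  rw [show (A.act.map (wmap R L X v a)).app a ≫ R.ev a X =
      (A.assoc v ((R.rhom a).obj ((L.lhom v).obj X))).hom.app a ≫ (A.act.obj v).map (R.ev a ((L.lhom v).obj X)) ≫ L.ev v X from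
    rev_homEquiv R _]
  simp only [CategoryTheory.Functor.map_comp, Category.assoc]
  rw [reassoc_of% (M.str_assoc v ((R.rhom a).obj ((L.lhom v).obj X)) a)]
  rw [Iso.inv_hom_id_app_assoc]
  rw [← reassoc_of% (hstr (R.ev a ((L.lhom v).obj X)))]
  rw [liftAlg_transpose]

lemma interp_lift (R : RightClosed A) (L : LeftClosed A) (M : StrongMonad A) {X : C}
    (s : M.F.obj X ⟶ X) (v : V) {c a : C} (t : c ⟶ M.F.obj a) :
    (A.act.obj v).map (interp R M.F M.str (liftAlg L M.F M.str s v) t) ≫ L.ev v X =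
      (A.assoc v ((R.rhom a).obj ((L.lhom v).obj X))).inv.app c ≫
        (A.act.map (wmap R L X v a)).app c ≫ interp R M.F M.str s t := by
  unfold interp
  rw [CategoryTheory.Functor.map_comp, Category.assoc, interpMap_lift]
  rw [← reassoc_of% ((A.act.map (wmap R L X v a)).naturality t)]
  rw [← reassoc_of% ((A.assoc v ((R.rhom a).obj ((L.lhom v).obj X))).inv.naturality t)]

lemma liftAlg_satisfies (R : RightClosed A) (L : LeftClosed A) (M : StrongMonad A) {X : C}
    (s : M.F.obj X ⟶ X) (v : V) {c a : C} {t₁ t₂ : c ⟶ M.F.obj a}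
    (h : Satisfies R M.F M.str s t₁ t₂) :
    Satisfies R M.F M.str (liftAlg L M.F M.str s v) t₁ t₂ := by
  have h' : interp R M.F M.str s t₁ = interp R M.F M.str s t₂ := h
  show interp R M.F M.str (liftAlg L M.F M.str s v) t₁ =
    interp R M.F M.str (liftAlg L M.F M.str s v) t₂
  apply lhom_ext L
  rw [interp_lift, interp_lift, h']

lemma em_hom_ext (M : StrongMonad A) {a Y : C} (t : M.F.obj Y ⟶ Y)
    {g₁ g₂ : M.F.obj a ⟶ Y}
    (h₁ : M.F.map g₁ ≫ t = M.mul.app a ≫ g₁)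
    (h₂ : M.F.map g₂ ≫ t = M.mul.app a ≫ g₂)
    (h : M.unit.app a ≫ g₁ = M.unit.app a ≫ g₂) : g₁ = g₂ := by
  have e : ∀ g : M.F.obj a ⟶ Y, M.F.map g ≫ t = M.mul.app a ≫ g →
      g = M.F.map (M.unit.app a ≫ g) ≫ t := by
    intro g hg
    rw [CategoryTheory.Functor.map_comp, Category.assoc, hg, ← Category.assoc,
        M.right_unit]
    simp
  rw [e g₁ h₁, e g₂ h₂, h]

end Aux


/-- **Internal strong completeness** (Theorem 7.? of the paper).
For a MES `S` admitting free algebras, with `q a : T a ⟶ T_S a` the quotient map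
(the unique homomorphic extension `(T a, μ_a) ⟶ (T_S a, τ_a)` of `η^S_a`),
the following are equivalent for a parallel pair `u, v : c ⟶ T a` of Kleisli maps:
(1) every `S`-algebra satisfies `u ≡ v`;
(2) the free `S`-algebra `(T_S a, τ_a)` on `a` satisfies `u ≡ v`;
(3) `u ≫ q a = v ≫ q a`. -/
theorem internal_strong_completeness
    {V : Type u₁} [Category.{v₁} V] [MonoidalCategory V]
    {C : Type u₂} [Category.{v₂} C]
    {A : MonAction V C} (S : MES A) (FA : FreeAlgebras S)
    (q : ∀ X : C, S.T.F.obj X ⟶ FA.TS X)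
    (hq_hom : ∀ X : C, S.T.F.map (q X) ≫ FA.τ X = S.T.mul.app X ≫ q X)
    (hq_unit : ∀ X : C, S.T.unit.app X ≫ q X = FA.unit X)
    {c a : C} (u v : c ⟶ S.T.F.obj a) :
    ((∀ (X : C) (s : S.T.F.obj X ⟶ X), IsSAlgebra S s →
        Satisfies S.R S.T.F S.T.str s u v) ↔
      Satisfies S.R S.T.F S.T.str (FA.τ a) u v) ∧
    (Satisfies S.R S.T.F S.T.str (FA.τ a) u v ↔ u ≫ q a = v ≫ q a) := by
  have hqchar : q a = S.T.F.map (FA.unit a) ≫ FA.τ a := by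
    calc q a = (S.T.F.map (S.T.unit.app a) ≫ S.T.mul.app a) ≫ q a := by
          rw [S.T.right_unit]; simp
      _ = S.T.F.map (S.T.unit.app a) ≫ S.T.F.map (q a) ≫ FA.τ a := by
          rw [Category.assoc, ← hq_hom]
      _ = S.T.F.map (S.T.unit.app a ≫ q a) ≫ FA.τ a := by
          rw [CategoryTheory.Functor.map_comp, Category.assoc]
      _ = S.T.F.map (FA.unit a) ≫ FA.τ a := by rw [hq_unit]
  have h12 : (∀ (X : C) (s : S.T.F.obj X ⟶ X), IsSAlgebra S s →
      Satisfies S.R S.T.F S.T.str s u v) → Satisfies S.R S.T.F S.T.str (FA.τ a) u v :=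
    fun h => h _ (FA.τ a) (FA.isAlg a)
  have h23 : Satisfies S.R S.T.F S.T.str (FA.τ a) u v → u ≫ q a = v ≫ q a := by
    intro h2
    set p := ((S.R.adj a).homEquiv (𝟙_ V) (FA.TS a)) (A.lam.hom.app a ≫ FA.unit a) with hp
    have key : ∀ t : c ⟶ S.T.F.obj a,
        A.lam.inv.app c ≫ (A.act.map p).app c ≫
          interp S.R S.T.F S.T.str (FA.τ a) t = t ≫ q a := by
      intro t
      have hln := A.lam.hom.naturality t
      simp only [Functor.id_map] at hln
      unfold interp interpMap
      rw [← reassoc_of% ((A.act.map p).naturality t)]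
      rw [reassoc_of% (S.T.str_natural p a)]
      rw [← S.T.F.map_comp_assoc ((A.act.map p).app a) (S.R.ev a (FA.TS a))]
      rw [show (A.act.map p).app a ≫ S.R.ev a (FA.TS a) =
          A.lam.hom.app a ≫ FA.unit a from rev_homEquiv S.R _]
      simp only [CategoryTheory.Functor.map_comp, Category.assoc]
      rw [reassoc_of% (S.T.str_lam a)]
      rw [reassoc_of% hln]
      rw [Iso.inv_hom_id_app_assoc]
      rw [hqchar]
    have h2' : interp S.R S.T.F S.T.str (FA.τ a) u =
        interp S.R S.T.F S.T.str (FA.τ a) v := h2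
    rw [← key u, ← key v, h2']
  have h31 : u ≫ q a = v ≫ q a → ∀ (X : C) (s : S.T.F.obj X ⟶ X), IsSAlgebra S s →
      Satisfies S.R S.T.F S.T.str s u v := by
    intro h3 X s hs
    obtain ⟨hEM, hsat⟩ := hs
    have tSAlg : IsSAlgebra S (liftAlg S.L S.T.F S.T.str s ((S.R.rhom a).obj X)) :=
      ⟨liftAlg_isEM S.L S.T s hEM _,
       fun e he => liftAlg_satisfies S.R S.L S.T s _ (hsat e he)⟩
    obtain ⟨g, ⟨hg1, hg2⟩, -⟩ :=
      FA.extend a (liftAlg S.L S.T.F S.T.str s ((S.R.rhom a).obj X)) tSAlg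
        (S.T.unit.app a ≫ mOf S.R S.L S.T.F S.T.str s a)
    have hqg : q a ≫ g = mOf S.R S.L S.T.F S.T.str s a := by
      apply em_hom_ext S.T (liftAlg S.L S.T.F S.T.str s ((S.R.rhom a).obj X))
      · rw [CategoryTheory.Functor.map_comp, Category.assoc, hg1, ← Category.assoc,
            hq_hom, Category.assoc]
      · exact mOf_em S.R S.L S.T s hEM.2 a
      · rw [← Category.assoc, hq_unit, hg2]
    have hIM : interpMap S.R S.T.F S.T.str s a =
        (A.act.obj ((S.R.rhom a).obj X)).map (mOf S.R S.L S.T.F S.T.str s a) ≫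
          S.L.ev ((S.R.rhom a).obj X) X :=
      (mOf_transpose S.R S.L S.T.F S.T.str s a).symm
    show interp S.R S.T.F S.T.str s u = interp S.R S.T.F S.T.str s v
    unfold interp
    rw [hIM, ← hqg]
    erw [← CategoryTheory.Functor.map_comp_assoc, ← CategoryTheory.Functor.map_comp_assoc,
        ← Category.assoc u, ← Category.assoc v, h3]
  exact ⟨⟨h12, fun h2 => h31 (h23 h2)⟩,
    ⟨h23, fun h3 => h12 (h31 h3)⟩⟩

end MonEq
end

section
/- Let S = (V, C, T, E) be a Monadic Equational System. If the equational judgement u ≡ v : C → TA is derivable from E in Equational Metalogic, then every S-algebra (X,s) satisfies u ≡ v. In particular, each individual rule is sound: Ref, Sym, Trans, Axiom, Comp (if u₁ ≡ v₁ : C → TB and u₂ ≡ v₂ : B → TA are satisfied then the Kleisli composites satisfy u₁{u₂} ≡ v₁{v₂} : C → TA, where w₁{w₂} = μ_A ∘ T(w₂) ∘ w₁), Ext (if u ≡ v : C → TA is satisfied then V ⊳ u ≡ V ⊳ v : V ⊳ C → T(V ⊳ A) is satisfied, where V ⊳ w denotes φ_{V,A} ∘ (V ⊳ w)), and Local (if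 u ∘ e_i ≡ v ∘ e_i is satisfied for a jointly epimorphic family {e_i : C_i → C}, then u ≡ v is satisfied). -/
open CategoryTheory MonoidalCategory Limits

universe w v₁ v₂ v₃ u₁ u₂ u₃

namespace MonEq

variable {V : Type u₁} [Category.{v₁} V] [MonoidalCategory V]
variable {C : Type u₂} [Category.{v₂} C]
variable {A : MonAction V C}

/-- A family of maps is jointly epimorphic. -/
def JointlyEpi {ι : Type w} {c : C} (D : ι → C) (e : ∀ i, D i ⟶ c) : Prop :=
  ∀ {Z : C} (f g : c ⟶ Z), (∀ i, e i ≫ f = e i ≫ g) → f = g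

/-- **Equational Metalogic**: the deductive system over Kleisli-map equations
generated by reflexivity, symmetry, transitivity, axioms, congruence of
(Kleisli) composition, congruence of the monoidal action, and local character. -/
inductive EML (S : MES A) : ∀ {c a : C}, (c ⟶ S.T.F.obj a) → (c ⟶ S.T.F.obj a) → Prop
  | ax {e : TEq S.T.F} (he : e ∈ S.E) : EML S e.lhs e.rhs
  | refl {c a : C} (u : c ⟶ S.T.F.obj a) : EML S u u
  | symm {c a : C} {u v : c ⟶ S.T.F.obj a} : EML S u v → EML S v u
  | trans {c a : C} {u v w : c ⟶ S.T.F.obj a} : EML S u v → EML S v w → EML S u w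
  | comp {c b a : C} {u₁ v₁ : c ⟶ S.T.F.obj b} {u₂ v₂ : b ⟶ S.T.F.obj a} :
      EML S u₁ v₁ → EML S u₂ v₂ →
      EML S (u₁ ≫ S.T.F.map u₂ ≫ S.T.mul.app a) (v₁ ≫ S.T.F.map v₂ ≫ S.T.mul.app a)
  | ext {c a : C} (v : V) {u w : c ⟶ S.T.F.obj a} : EML S u w →
      EML S ((A.act.obj v).map u ≫ (S.T.str v).app a)
            ((A.act.obj v).map w ≫ (S.T.str v).app a)
  | local_ {c a : C} {u v : c ⟶ S.T.F.obj a} {ι : Type w} (D : ι → C)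
      (e : ∀ i, D i ⟶ c) (he : JointlyEpi D e)
      (h : ∀ i, EML S (e i ≫ u) (e i ≫ v)) : EML S u v


section SoundnessLemmas

/-- Interpretation of a precomposed Kleisli map. -/
lemma interp_precomp (R : RightClosed A) (T : C ⥤ C)
    (σ : ∀ v : V, T ⋙ A.act.obj v ⟶ A.act.obj v ⋙ T)
    {X : C} (s : T.obj X ⟶ X) {c' c a : C} (f : c' ⟶ c) (t : c ⟶ T.obj a) :
    interp R T σ s (f ≫ t) =
      (A.act.obj ((R.rhom a).obj X)).map f ≫ interp R T σ s t := by
  simp [interp]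

/-- Soundness of the `Local` rule: the action functors have right adjoints,
hence preserve jointly epimorphic families. -/
lemma local_sound (R : RightClosed A) (L : LeftClosed A) (T : C ⥤ C)
    (σ : ∀ v : V, T ⋙ A.act.obj v ⟶ A.act.obj v ⋙ T)
    {X : C} (s : T.obj X ⟶ X) {c a : C} (u v : c ⟶ T.obj a) {ι : Type w}
    (D : ι → C) (e : ∀ i, D i ⟶ c) (he : JointlyEpi D e)
    (h : ∀ i, Satisfies R T σ s (e i ≫ u) (e i ≫ v)) :
    Satisfies R T σ s u v := by
  unfold Satisfies
  set W : V := (R.rhom a).obj X with hW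
  apply ((L.adj W).homEquiv c X).injective
  apply he
  intro i
  have hi := h i
  unfold Satisfies at hi
  rw [interp_precomp, interp_precomp] at hi
  rw [← Adjunction.homEquiv_naturality_left, ← Adjunction.homEquiv_naturality_left, hi]

/-- Key identity for the `Comp` rule: the interpretation of a Kleisli composite
factors through the transpose of the interpretation of the second component. -/
lemma interp_kleisli (R : RightClosed A) (M : StrongMonad A) {X : C}
    (s : M.F.obj X ⟶ X) (hEM : IsEMAlgebra M s) {c b a : C}
    (w₁ : c ⟶ M.F.obj b) (w₂ : b ⟶ M.F.obj a) :
    interp R M.F M.str s (w₁ ≫ M.F.map w₂ ≫ M.mul.app a) =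
      (A.act.map (((R.adj b).homEquiv ((R.rhom a).obj X) X)
          (interp R M.F M.str s w₂))).app c ≫
        interp R M.F M.str s w₁ := by
  set W : V := (R.rhom a).obj X with hW
  set W' : V := (R.rhom b).obj X with hW'
  set hhat : W ⟶ W' := ((R.adj b).homEquiv W X) (interp R M.F M.str s w₂)
    with hhat_def
  have hev : (A.act.map hhat).app b ≫ R.ev b X =
      (A.act.obj W).map w₂ ≫ (M.str W).app a ≫ M.F.map (R.ev a X) ≫ s := by
    have h0 := ((R.adj b).homEquiv W X).symm_apply_apply (interp R M.F M.str s w₂)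
    rw [Adjunction.homEquiv_counit] at h0
    simp [RightClosed.ev, interp, interpMap, ← hhat_def] at h0
    exact h0
  have hnatσ : (A.act.obj W).map (M.F.map w₂) ≫ (M.str W).app (M.F.obj a) =
      (M.str W).app b ≫ M.F.map ((A.act.obj W).map w₂) := (M.str W).naturality w₂
  have hmul : M.F.map (M.F.map (R.ev a X)) ≫ M.mul.app X =
      M.mul.app ((A.act.obj W).obj a) ≫ M.F.map (R.ev a X) :=
    M.mul.naturality (R.ev a X)
  have hnath : (A.act.obj W).map w₁ ≫ (A.act.map hhat).app (M.F.obj b) =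
      (A.act.map hhat).app c ≫ (A.act.obj W').map w₁ :=
    (A.act.map hhat).naturality w₁
  have hev3 : M.F.map ((A.act.map hhat).app b) ≫ M.F.map (R.ev b X) ≫ s =
      M.F.map ((A.act.obj W).map w₂) ≫ M.F.map ((M.str W).app a) ≫
        M.F.map (M.F.map (R.ev a X)) ≫ M.F.map s ≫ s := by
    rw [← Functor.map_comp_assoc, hev]
    simp [Functor.map_comp]
  simp only [interp, interpMap, Functor.map_comp, Category.assoc]
  rw [← reassoc_of% (M.mul_str W a), ← reassoc_of% hmul, hEM.2,
      reassoc_of% hnatσ, ← reassoc_of% hnath,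
      reassoc_of% (M.str_natural hhat b), hev3]

/-- Soundness of the `Comp` rule. -/
lemma comp_sound (R : RightClosed A) (M : StrongMonad A) {X : C}
    (s : M.F.obj X ⟶ X) (hEM : IsEMAlgebra M s) {c b a : C}
    (u₁ v₁ : c ⟶ M.F.obj b) (u₂ v₂ : b ⟶ M.F.obj a)
    (h₁ : Satisfies R M.F M.str s u₁ v₁) (h₂ : Satisfies R M.F M.str s u₂ v₂) :
    Satisfies R M.F M.str s (u₁ ≫ M.F.map u₂ ≫ M.mul.app a)
      (v₁ ≫ M.F.map v₂ ≫ M.mul.app a) := by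
  unfold Satisfies at *
  rw [interp_kleisli R M s hEM u₁ u₂, interp_kleisli R M s hEM v₁ v₂, h₁, h₂]

/-- Key identity for the `Ext` rule. -/
lemma interp_ext_eq (R : RightClosed A) (M : StrongMonad A) {X : C}
    (s : M.F.obj X ⟶ X) (v : V) {c a : C} (u : c ⟶ M.F.obj a) :
    (A.assoc ((R.rhom ((A.act.obj v).obj a)).obj X) v).hom.app c ≫
      interp R M.F M.str s ((A.act.obj v).map u ≫ (M.str v).app a) =
      (A.act.map (hatg R X v a)).app c ≫ interp R M.F M.str s u := by
  set W : V := (R.rhom ((A.act.obj v).obj a)).obj X with hW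
  set W' : V := (R.rhom a).obj X with hW'
  have hg : (A.act.map (hatg R X v a)).app a ≫ R.ev a X =
      (A.assoc W v).hom.app a ≫ R.ev ((A.act.obj v).obj a) X := by
    have h0 := ((R.adj a).homEquiv (W ⊗ v) X).symm_apply_apply
      ((A.assoc W v).hom.app a ≫ R.ev ((A.act.obj v).obj a) X)
    rw [Adjunction.homEquiv_counit] at h0
    simpa [RightClosed.ev, hatg] using h0
  have hnatα : (A.act.obj (W ⊗ v)).map u ≫ (A.assoc W v).hom.app (M.F.obj a) =
      (A.assoc W v).hom.app c ≫ (A.act.obj W).map ((A.act.obj v).map u) :=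
    (A.assoc W v).hom.naturality u
  have hg2 : M.F.map ((A.assoc W v).hom.app a) ≫ M.F.map (R.ev ((A.act.obj v).obj a) X) ≫ s =
      M.F.map ((A.act.map (hatg R X v a)).app a) ≫ M.F.map (R.ev a X) ≫ s := by
    rw [← Functor.map_comp_assoc, ← hg, Functor.map_comp_assoc]
  have hnatg : (A.act.obj (W ⊗ v)).map u ≫ (A.act.map (hatg R X v a)).app (M.F.obj a) =
      (A.act.map (hatg R X v a)).app c ≫ (A.act.obj W').map u :=
    (A.act.map (hatg R X v a)).naturality u
  simp only [interp, interpMap, Functor.map_comp, Category.assoc]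
  rw [← reassoc_of% hnatα, ← reassoc_of% (M.str_assoc W v a), hg2,
      ← reassoc_of% (M.str_natural (hatg R X v a) a), reassoc_of% hnatg]

/-- Soundness of the `Ext` rule. -/
lemma ext_sound (R : RightClosed A) (M : StrongMonad A) {X : C}
    (s : M.F.obj X ⟶ X) (v : V) {c a : C} (u w : c ⟶ M.F.obj a)
    (h : Satisfies R M.F M.str s u w) :
    Satisfies R M.F M.str s ((A.act.obj v).map u ≫ (M.str v).app a)
      ((A.act.obj v).map w ≫ (M.str v).app a) := by
  unfold Satisfies at *
  set W : V := (R.rhom ((A.act.obj v).obj a)).obj X with hW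
  have h1 := interp_ext_eq R M s v u
  have h2 := interp_ext_eq R M s v w
  have key : (A.assoc W v).hom.app c ≫
        interp R M.F M.str s ((A.act.obj v).map u ≫ (M.str v).app a) =
      (A.assoc W v).hom.app c ≫
        interp R M.F M.str s ((A.act.obj v).map w ≫ (M.str v).app a) := by
    rw [h1, h2, h]
  exact (cancel_epi ((A.assoc W v).hom.app c)).mp key

end SoundnessLemmas

/-- **Soundness of Equational Metalogic**: if `u ≡ v` is derivable from the
axioms of `S` in EML then every `S`-algebra satisfies `u ≡ v`.  In particular
each individual rule is sound; for the nontrivial rules (`Comp`, `Ext`, `Local`)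
satisfaction by any Eilenberg–Moore algebra is closed under the corresponding
inference. -/
theorem eml_soundness (S : MES A) :
    (∀ {c a : C} (u v : c ⟶ S.T.F.obj a), EML.{w} S u v →
      ∀ (X : C) (s : S.T.F.obj X ⟶ X), IsSAlgebra S s →
        Satisfies S.R S.T.F S.T.str s u v) ∧
    (∀ (X : C) (s : S.T.F.obj X ⟶ X), IsEMAlgebra S.T s →
      -- soundness of Comp
      (∀ {c b a : C} (u₁ v₁ : c ⟶ S.T.F.obj b) (u₂ v₂ : b ⟶ S.T.F.obj a),
        Satisfies S.R S.T.F S.T.str s u₁ v₁ →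
        Satisfies S.R S.T.F S.T.str s u₂ v₂ →
        Satisfies S.R S.T.F S.T.str s
          (u₁ ≫ S.T.F.map u₂ ≫ S.T.mul.app a) (v₁ ≫ S.T.F.map v₂ ≫ S.T.mul.app a)) ∧
      -- soundness of Ext
      (∀ (v : V) {c a : C} (u w : c ⟶ S.T.F.obj a),
        Satisfies S.R S.T.F S.T.str s u w →
        Satisfies S.R S.T.F S.T.str s
          ((A.act.obj v).map u ≫ (S.T.str v).app a)
          ((A.act.obj v).map w ≫ (S.T.str v).app a)) ∧
      -- soundness of Local
      (∀ {c a : C} (u v : c ⟶ S.T.F.obj a) {ι : Type w} (D : ι → C)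
        (e : ∀ i, D i ⟶ c), JointlyEpi D e →
        (∀ i, Satisfies S.R S.T.F S.T.str s (e i ≫ u) (e i ≫ v)) →
        Satisfies S.R S.T.F S.T.str s u v)) := by
  constructor
  · intro c a u v h
    induction h with
    | ax he => exact fun X s hS => hS.2 _ he
    | refl u => exact fun X s _ => rfl
    | symm _ ih => exact fun X s hS => (ih X s hS).symm
    | trans _ _ ih₁ ih₂ => exact fun X s hS => (ih₁ X s hS).trans (ih₂ X s hS)
    | comp _ _ ih₁ ih₂ =>
        exact fun X s hS => comp_sound S.R S.T s hS.1 _ _ _ _ (ih₁ X s hS) (ih₂ X s hS)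
    | ext v _ ih => exact fun X s hS => ext_sound S.R S.T s v _ _ (ih X s hS)
    | local_ D e he _ ih =>
        exact fun X s hS =>
          local_sound S.R S.L S.T.F S.T.str s _ _ D e he (fun i => ih i X s hS)
  · intro X s hEM
    refine ⟨?_, ?_, ?_⟩
    · intro c b a u₁ v₁ u₂ v₂ h₁ h₂
      exact comp_sound S.R S.T s hEM u₁ v₁ u₂ v₂ h₁ h₂
    · intro v c a u w h
      exact ext_sound S.R S.T s v u w h
    · intro c a u v ι D e he h
      exact local_sound S.R S.L S.T.F S.T.str s u v D e he h

end MonEq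
end

section
/- Let T be a strong endofunctor (respectively, a strong monad) on a biclosed V-action C, and let X be an object of C. Then T-algebra structures s : TX → X (respectively, Eilenberg–Moore algebra structures for the monad) on X are in bijective correspondence with strong endofunctor morphisms (respectively, strong monad morphisms) T → K_X to the double-dualization monad, the correspondence sending a morphism τ to ε_X ∘ τ_X (for ε the counit of the clone adjunction at X) and an algebra s to the transpose m(s) of the interpretation maps ι(s)_A : C̲(A,X) ⊳ TA → X. -/
open CategoryTheory MonoidalCategory Limits

universe w v₁ v₂ v₃ u₁ u₂ u₃

namespace MonEq

variable {V : Type u₁} [Category.{v₁} V] [MonoidalCategory V]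
variable {C : Type u₂} [Category.{v₂} C]
variable {A : MonAction V C}

attribute [reducible] Kobj

section Helpers

lemma ltr_ev (L : LeftClosed A) (v : V) {c x : C} (f : (A.act.obj v).obj c ⟶ x) :
    (A.act.obj v).map (((L.adj v).homEquiv c x) f) ≫ L.ev v x = f := by
  rw [LeftClosed.ev, ← Adjunction.homEquiv_counit]
  exact ((L.adj v).homEquiv c x).symm_apply_apply f

lemma ltr_ext (L : LeftClosed A) (v : V) {c x : C} {f g : c ⟶ (L.lhom v).obj x}
    (h : (A.act.obj v).map f ≫ L.ev v x = (A.act.obj v).map g ≫ L.ev v x) : f = g := by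
  apply ((L.adj v).homEquiv c x).symm.injective
  simpa only [Adjunction.homEquiv_counit, LeftClosed.ev] using h

lemma ltr_uniq (L : LeftClosed A) (v : V) {c x : C} {g : c ⟶ (L.lhom v).obj x}
    {f : (A.act.obj v).obj c ⟶ x}
    (h : (A.act.obj v).map g ≫ L.ev v x = f) : g = ((L.adj v).homEquiv c x) f := by
  apply ltr_ext L v
  rw [h, ltr_ev]

lemma rtr_ev (R : RightClosed A) (a : C) {v : V} {x : C} (f : (A.act.obj v).obj a ⟶ x) :
    (A.act.map (((R.adj a).homEquiv v x) f)).app a ≫ R.ev a x = f := by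
  have := ((R.adj a).homEquiv v x).symm_apply_apply f
  simpa only [Adjunction.homEquiv_counit, Functor.flip_obj_map, RightClosed.ev] using this

lemma rtr_ext (R : RightClosed A) (a : C) {v : V} {x : C} {f g : v ⟶ (R.rhom a).obj x}
    (h : (A.act.map f).app a ≫ R.ev a x = (A.act.map g).app a ≫ R.ev a x) : f = g := by
  apply ((R.adj a).homEquiv v x).symm.injective
  simpa only [Adjunction.homEquiv_counit, Functor.flip_obj_map, RightClosed.ev] using h

lemma lmap_ev (L : LeftClosed A) {v w : V} (h : v ⟶ w) (x : C) :
    (A.act.obj v).map (L.lmap h x) ≫ L.ev v x =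
      (A.act.map h).app ((L.lhom w).obj x) ≫ L.ev w x :=
  ltr_ev L v _

lemma rmap_ev (R : RightClosed A) {a b : C} (f : a ⟶ b) (x : C) :
    (A.act.map (R.rmap f x)).app a ≫ R.ev a x =
      (A.act.obj ((R.rhom b).obj x)).map f ≫ R.ev b x :=
  rtr_ev R a _

lemma hatg_ev (R : RightClosed A) (X : C) (v : V) (a : C) :
    (A.act.map (hatg R X v a)).app a ≫ R.ev a X =
      (A.assoc ((R.rhom ((A.act.obj v).obj a)).obj X) v).hom.app a ≫
        R.ev ((A.act.obj v).obj a) X :=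
  rtr_ev R a _

lemma cloneStr_ev (R : RightClosed A) (L : LeftClosed A) (X Y : C) (v : V) (a : C) :
    (A.act.obj ((R.rhom ((A.act.obj v).obj a)).obj X)).map (cloneStr R L X Y v a) ≫
        L.ev ((R.rhom ((A.act.obj v).obj a)).obj X) Y =
      (A.assoc ((R.rhom ((A.act.obj v).obj a)).obj X) v).inv.app
          ((L.lhom ((R.rhom a).obj X)).obj Y) ≫
        (A.act.map (hatg R X v a)).app ((L.lhom ((R.rhom a).obj X)).obj Y) ≫
        L.ev ((R.rhom a).obj X) Y :=
  ltr_ev L _ _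

lemma mOf_ev (R : RightClosed A) (L : LeftClosed A) (T : C ⥤ C)
    (σ : ∀ v : V, T ⋙ A.act.obj v ⟶ A.act.obj v ⋙ T)
    {X : C} (s : T.obj X ⟶ X) (a : C) :
    (A.act.obj ((R.rhom a).obj X)).map (mOf R L T σ s a) ≫
        L.ev ((R.rhom a).obj X) X = interpMap R T σ s a :=
  ltr_ev L _ _

lemma dd_ev (R : RightClosed A) (L : LeftClosed A) (X : C) (v : V) :
    (A.act.map (dd R L X v)).app ((L.lhom v).obj X) ≫
        R.ev ((L.lhom v).obj X) X = L.ev v X :=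
  rtr_ev R _ _

lemma ddUnit_ev (R : RightClosed A) (L : LeftClosed A) (X a : C) :
    (A.act.obj ((R.rhom a).obj X)).map (ddUnit R L X a) ≫
        L.ev ((R.rhom a).obj X) X = R.ev a X :=
  ltr_ev L _ _

lemma ddMult_ev (R : RightClosed A) (L : LeftClosed A) (X a : C) :
    (A.act.obj ((R.rhom a).obj X)).map (ddMult R L X a) ≫
        L.ev ((R.rhom a).obj X) X =
      (A.act.map (dd R L X ((R.rhom a).obj X))).app
          ((L.lhom ((R.rhom ((L.lhom ((R.rhom a).obj X)).obj X)).obj X)).obj X) ≫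
        L.ev ((R.rhom ((L.lhom ((R.rhom a).obj X)).obj X)).obj X) X :=
  ltr_ev L _ _

end Helpers

section Core

variable (R : RightClosed A) (L : LeftClosed A)

lemma interpMap_natural (T : StrongEndo A) {X : C} (s : T.F.obj X ⟶ X) {a b : C} (f : a ⟶ b) :
    (A.act.obj ((R.rhom b).obj X)).map (T.F.map f) ≫ interpMap R T.F T.str s b =
      (A.act.map (R.rmap f X)).app (T.F.obj a) ≫ interpMap R T.F T.str s a := by
  simp only [interpMap]
  calc (A.act.obj ((R.rhom b).obj X)).map (T.F.map f) ≫
        (T.str ((R.rhom b).obj X)).app b ≫ T.F.map (R.ev b X) ≫ s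
      = (T.str ((R.rhom b).obj X)).app a ≫
          T.F.map ((A.act.obj ((R.rhom b).obj X)).map f) ≫ T.F.map (R.ev b X) ≫ s := by
        have := (T.str ((R.rhom b).obj X)).naturality f
        simp only [Functor.comp_map] at this
        rw [reassoc_of% this]
    _ = (T.str ((R.rhom b).obj X)).app a ≫
          T.F.map ((A.act.map (R.rmap f X)).app a) ≫ T.F.map (R.ev a X) ≫ s := by
        rw [← Functor.map_comp_assoc, ← Functor.map_comp_assoc, rmap_ev]
    _ = (A.act.map (R.rmap f X)).app (T.F.obj a) ≫
          (T.str ((R.rhom a).obj X)).app a ≫ T.F.map (R.ev a X) ≫ s := by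
        rw [reassoc_of% (T.str_natural (R.rmap f X) a)]

lemma mOf_natural (T : StrongEndo A) {X : C} (s : T.F.obj X ⟶ X) {a b : C} (f : a ⟶ b) :
    T.F.map f ≫ mOf R L T.F T.str s b = mOf R L T.F T.str s a ≫ Kmap R L X f := by
  apply ltr_ext L _
  simp only [Functor.map_comp, Category.assoc]
  rw [mOf_ev, Kmap, lmap_ev]
  have h := reassoc_of% ((A.act.map (R.rmap f X)).naturality (mOf R L T.F T.str s a))
  simp only [Kobj] at h
  rw [h, mOf_ev, interpMap_natural]

lemma mOf_strong (T : StrongEndo A) {X : C} (s : T.F.obj X ⟶ X) (v : V) (a : C) :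
    (A.act.obj v).map (mOf R L T.F T.str s a) ≫ cloneStr R L X X v a =
      (T.str v).app a ≫ mOf R L T.F T.str s ((A.act.obj v).obj a) := by
  set w : V := (R.rhom ((A.act.obj v).obj a)).obj X with hw
  set u : V := (R.rhom a).obj X with hu
  apply ltr_ext L w
  simp only [Functor.map_comp, Category.assoc]
  rw [cloneStr_ev, mOf_ev]
  -- LHS transformations
  have h1 := reassoc_of% ((A.assoc w v).inv.naturality (mOf R L T.F T.str s a))
  simp only [Functor.comp_map, Kobj] at h1
  rw [h1]
  have h2 := reassoc_of% ((A.act.map (hatg R X v a)).naturality (mOf R L T.F T.str s a))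
  simp only [Kobj] at h2
  rw [h2, mOf_ev]
  simp only [interpMap]
  rw [reassoc_of% (T.str_natural (hatg R X v a) a)]
  rw [← Functor.map_comp_assoc (T.F), hatg_ev, Functor.map_comp_assoc]
  rw [reassoc_of% (T.str_assoc w v a)]
  simp
  rfl

lemma lmap_comp {v w z : V} (h : v ⟶ w) (h' : z ⟶ v) (x : C) :
    L.lmap h x ≫ L.lmap h' x = L.lmap (h' ≫ h) x := by
  apply ltr_ext L z
  simp only [Functor.map_comp, Category.assoc, lmap_ev]
  rw [reassoc_of% ((A.act.map h').naturality (L.lmap h x)), lmap_ev]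
  simp [Functor.map_comp, NatTrans.comp_app]

lemma ltr_comp_cleval (X : C) {Z : C} (g : (A.act.obj ((R.rhom X).obj X)).obj Z ⟶ X) :
    ((L.adj ((R.rhom X).obj X)).homEquiv Z X) g ≫ cleval R L X =
      A.lam.inv.app Z ≫
        (A.act.map (((R.adj X).homEquiv (𝟙_ V) X) (A.lam.hom.app X))).app Z ≫ g := by
  rw [cleval]
  have h0 := reassoc_of% (A.lam.inv.naturality
    (((L.adj ((R.rhom X).obj X)).homEquiv Z X) g ≫
      L.lmap (((R.adj X).homEquiv (𝟙_ V) X) (A.lam.hom.app X)) X))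
  rw [h0]
  simp only [Functor.map_comp, Category.assoc, lmap_ev]
  rw [reassoc_of% ((A.act.map (((R.adj X).homEquiv (𝟙_ V) X) (A.lam.hom.app X))).naturality
      (((L.adj ((R.rhom X).obj X)).homEquiv Z X) g)), ltr_ev]

/-- Generalized round-trip computation through `cleval`. -/
lemma str_cleval (T : StrongEndo A) (X : C) {c : C}
    (w : (A.act.obj ((R.rhom X).obj X)).obj c ⟶ c) (t : T.F.obj c ⟶ X)
    (hyp : (A.act.map (((R.adj X).homEquiv (𝟙_ V) X) (A.lam.hom.app X))).app c ≫ w =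
      A.lam.hom.app c) :
    ((L.adj ((R.rhom X).obj X)).homEquiv (T.F.obj c) X)
        ((T.str ((R.rhom X).obj X)).app c ≫ T.F.map w ≫ t) ≫ cleval R L X = t := by
  rw [ltr_comp_cleval]
  rw [reassoc_of% (T.str_natural (((R.adj X).homEquiv (𝟙_ V) X) (A.lam.hom.app X)) c)]
  rw [← Functor.map_comp_assoc, hyp, reassoc_of% (T.str_lam c)]
  simp

lemma mOf_cleval (T : StrongEndo A) {X : C} (s : T.F.obj X ⟶ X) :
    mOf R L T.F T.str s X ≫ cleval R L X = s := by
  rw [mOf, interpMap, str_cleval R L T X (R.ev X X) s (rtr_ev R X _)]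

lemma ddUnit_cleval (X : C) : ddUnit R L X X ≫ cleval R L X = 𝟙 X := by
  rw [ddUnit, ltr_comp_cleval, rtr_ev]
  simp

lemma assoc_natural_left {u u' : V} (g : u ⟶ u') (v : V) (c : C) :
    (A.act.map (g ⊗ₘ 𝟙 v)).app c ≫ (A.assoc u' v).hom.app c =
      (A.assoc u v).hom.app c ≫ (A.act.map g).app ((A.act.obj v).obj c) := by
  have := A.assoc_natural g (𝟙 v) c
  simpa using this

lemma lam_inv_assoc (u : V) (c : C) :
    (A.act.map (λ_ u).inv).app c ≫ (A.assoc (𝟙_ V) u).hom.app c =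
      A.lam.inv.app ((A.act.obj u).obj c) := by
  rw [← cancel_mono (A.lam.hom.app ((A.act.obj u).obj c)), Category.assoc,
    A.triangle_left, Iso.inv_hom_id_app, ← NatTrans.comp_app, ← Functor.map_comp]
  simp

lemma cloneStr_counit (X a : C) :
    cloneStr R L X X ((R.rhom a).obj X) a ≫ Kmap R L X (R.ev a X) ≫ cleval R L X =
      L.ev ((R.rhom a).obj X) X := by
  set u : V := (R.rhom a).obj X with hu
  set w : V := (R.rhom ((A.act.obj u).obj a)).obj X with hw
  set e : 𝟙_ V ⟶ (R.rhom X).obj X := ((R.adj X).homEquiv (𝟙_ V) X) (A.lam.hom.app X) with he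
  set g : 𝟙_ V ⟶ w := e ≫ R.rmap (R.ev a X) X with hg
  have hg_ev : (A.act.map g).app ((A.act.obj u).obj a) ≫ R.ev ((A.act.obj u).obj a) X =
      A.lam.hom.app ((A.act.obj u).obj a) ≫ R.ev a X := by
    rw [hg]
    simp only [Functor.map_comp, NatTrans.comp_app, Category.assoc]
    rw [rmap_ev, ← reassoc_of% ((A.act.map e).naturality (R.ev a X)), he, rtr_ev]
    have := A.lam.hom.naturality (R.ev a X)
    simp only [Functor.id_map] at this
    rw [this]
  have hgen : ∀ c : C,
      A.lam.inv.app ((A.act.obj u).obj c) ≫ (A.act.map g).app ((A.act.obj u).obj c) ≫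
          (A.assoc w u).inv.app c =
        (A.act.map ((λ_ u).inv ≫ (g ⊗ₘ 𝟙 u))).app c := by
    intro c
    rw [← cancel_mono ((A.assoc w u).hom.app c)]
    simp only [Category.assoc, Iso.inv_hom_id_app, Category.comp_id,
      Functor.map_comp, NatTrans.comp_app]
    rw [assoc_natural_left, reassoc_of% (lam_inv_assoc u c)]
    simp
  have hV : (λ_ u).inv ≫ (g ⊗ₘ 𝟙 u) ≫ hatg R X u a = 𝟙 u := by
    apply rtr_ext R a
    simp only [Functor.map_comp, NatTrans.comp_app, Category.assoc,
      Functor.map_id, NatTrans.id_app, Category.id_comp]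
    rw [hatg_ev, reassoc_of% (assoc_natural_left g u a), hg_ev,
      reassoc_of% (A.triangle_left u a), ← NatTrans.comp_app_assoc,
      ← Functor.map_comp, Iso.inv_hom_id]
  rw [cleval, Kmap, reassoc_of% (lmap_comp L (R.rmap (R.ev a X) X) e X), ← hg]
  have h0 := reassoc_of% (A.lam.inv.naturality
    (cloneStr R L X X u a ≫ L.lmap g X))
  rw [h0]
  simp only [Functor.map_comp, Category.assoc]
  rw [lmap_ev, reassoc_of% ((A.act.map g).naturality (cloneStr R L X X u a)),
    cloneStr_ev]
  have hgen' := reassoc_of% (hgen ((L.lhom ((R.rhom a).obj X)).obj X))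
  rw [hgen', ← NatTrans.comp_app_assoc, ← Functor.map_comp, Category.assoc, hV]
  simp

lemma mOf_roundtrip (T : StrongEndo A) (X : C)
    (τ : ∀ a : C, T.F.obj a ⟶ Kobj R L X a)
    (hnat : ∀ {a b : C} (f : a ⟶ b), T.F.map f ≫ τ b = τ a ≫ Kmap R L X f)
    (hstr : ∀ (v : V) (a : C), (A.act.obj v).map (τ a) ≫ cloneStr R L X X v a =
        (T.str v).app a ≫ τ ((A.act.obj v).obj a)) (a : C) :
    mOf R L T.F T.str (τ X ≫ cleval R L X) a = τ a := by
  apply ltr_ext L _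
  rw [mOf_ev]
  simp only [interpMap]
  rw [reassoc_of% (hnat (R.ev a X)),
    ← reassoc_of% (hstr ((R.rhom a).obj X) a), cloneStr_counit]

lemma interpMap_mul (M : StrongMonad A) {X : C} (s : M.F.obj X ⟶ X) (a : C) :
    (A.act.obj ((R.rhom a).obj X)).map (M.mul.app a) ≫ interpMap R M.F M.str s a =
      (M.str ((R.rhom a).obj X)).app (M.F.obj a) ≫
        M.F.map ((M.str ((R.rhom a).obj X)).app a ≫ M.F.map (R.ev a X)) ≫
        M.mul.app X ≫ s := by
  simp only [interpMap]
  rw [← reassoc_of% (M.mul_str ((R.rhom a).obj X) a)]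
  have h := M.mul.naturality (R.ev a X)
  simp only [Functor.comp_map] at h
  rw [← reassoc_of% h, ← Functor.map_comp_assoc]

lemma mOf_mul_rhs (M : StrongMonad A) {X : C} (s : M.F.obj X ⟶ X) (a : C) :
    (A.act.obj ((R.rhom a).obj X)).map (mOf R L M.F M.str s (M.F.obj a)) ≫
      (A.act.obj ((R.rhom a).obj X)).map (Kmap R L X (mOf R L M.F M.str s a)) ≫
      (A.act.obj ((R.rhom a).obj X)).map (ddMult R L X a) ≫
      L.ev ((R.rhom a).obj X) X =
      (M.str ((R.rhom a).obj X)).app (M.F.obj a) ≫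
        M.F.map ((M.str ((R.rhom a).obj X)).app a ≫ M.F.map (R.ev a X)) ≫
        M.F.map s ≫ s := by
  have inner : (A.act.map (dd R L X ((R.rhom a).obj X))).app (M.F.obj a) ≫
      (A.act.map (R.rmap (mOf R L M.F M.str s a) X)).app (M.F.obj a) ≫
      R.ev (M.F.obj a) X = interpMap R M.F M.str s a := by
    rw [rmap_ev]
    simp only [Kobj]
    have hn := reassoc_of% ((A.act.map (dd R L X ((R.rhom a).obj X))).naturality
      (mOf R L M.F M.str s a))
    simp only [Kobj] at hn
    rw [← hn, dd_ev, mOf_ev]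
  rw [ddMult, lmap_ev]
  have h1 := reassoc_of% ((A.act.map (dd R L X ((R.rhom a).obj X))).naturality
    (Kmap R L X (mOf R L M.F M.str s a)))
  simp only [Kobj] at h1
  rw [h1]
  have h2 := reassoc_of% ((A.act.map (dd R L X ((R.rhom a).obj X))).naturality
    (mOf R L M.F M.str s (M.F.obj a)))
  simp only [Kobj] at h2
  rw [h2, Kmap, lmap_ev]
  have h3 := reassoc_of% ((A.act.map (R.rmap (mOf R L M.F M.str s a) X)).naturality
    (mOf R L M.F M.str s (M.F.obj a)))
  simp only [Kobj] at h3
  rw [h3, mOf_ev]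
  simp only [interpMap, Kobj]
  rw [reassoc_of% (M.str_natural (R.rmap (mOf R L M.F M.str s a) X) (M.F.obj a))]
  simp only [Kobj]
  rw [reassoc_of% (M.str_natural (dd R L X ((R.rhom a).obj X)) (M.F.obj a))]
  rw [← Functor.map_comp_assoc, ← Functor.map_comp_assoc]
  simp only [Category.assoc]
  rw [inner]
  simp only [interpMap, Functor.map_comp, Category.assoc]

lemma mOf_unit (M : StrongMonad A) {X : C} (s : M.F.obj X ⟶ X)
    (hs : M.unit.app X ≫ s = 𝟙 X) (a : C) :
    M.unit.app a ≫ mOf R L M.F M.str s a = ddUnit R L X a := by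
  apply ltr_ext L _
  simp only [Functor.map_comp, Category.assoc]
  rw [mOf_ev, ddUnit_ev]
  simp only [interpMap]
  rw [reassoc_of% (M.unit_str ((R.rhom a).obj X) a)]
  have h := M.unit.naturality (R.ev a X)
  simp only [Functor.id_map] at h
  rw [← reassoc_of% h, hs, Category.comp_id]

lemma mOf_mul (M : StrongMonad A) {X : C} (s : M.F.obj X ⟶ X)
    (hs2 : M.mul.app X ≫ s = M.F.map s ≫ s) (a : C) :
    M.mul.app a ≫ mOf R L M.F M.str s a =
      mOf R L M.F M.str s (M.F.obj a) ≫ Kmap R L X (mOf R L M.F M.str s a) ≫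
        ddMult R L X a := by
  apply ltr_ext L _
  simp only [Functor.map_comp, Category.assoc]
  rw [mOf_ev, interpMap_mul R M s a, mOf_mul_rhs R L M s a, hs2]

end Core

end MonEq

namespace MonEq

/-- **Algebras vs. morphisms into the double dualization** (Theorem 3.? of the
paper).  For a strong endofunctor (resp. strong monad) `T` on a biclosed
`V`-action and `X ∈ C`, the `T`-algebra (resp. Eilenberg–Moore algebra)
structures on `X` are in bijective correspondence with the strong endofunctor
(resp. strong monad) morphisms `T ⟶ K_X`, where `τ ↦ ε_X ∘ τ_X` and
`s ↦ m(s)` (the transpose of the interpretation maps `ι(s)_a`). -/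
theorem algebras_biject_with_strong_morphisms
    {V : Type u₁} [Category.{v₁} V] [MonoidalCategory V]
    {C : Type u₂} [Category.{v₂} C]
    (A : MonAction V C) (R : RightClosed A) (L : LeftClosed A) (X : C) :
    -- strong endofunctor case
    (∀ T : StrongEndo A,
      (∀ s : T.F.obj X ⟶ X,
        -- `m(s)` is natural
        (∀ {a b : C} (f : a ⟶ b),
          T.F.map f ≫ mOf R L T.F T.str s b = mOf R L T.F T.str s a ≫ Kmap R L X f) ∧
        -- `m(s)` commutes with the strengths (w.r.t. the clone strength on `K_X`)
        (∀ (v : V) (a : C),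
          (A.act.obj v).map (mOf R L T.F T.str s a) ≫ cloneStr R L X X v a =
            (T.str v).app a ≫ mOf R L T.F T.str s ((A.act.obj v).obj a)) ∧
        -- one round trip
        mOf R L T.F T.str s X ≫ cleval R L X = s) ∧
      -- the other round trip
      (∀ τ : ∀ a : C, T.F.obj a ⟶ Kobj R L X a,
        (∀ {a b : C} (f : a ⟶ b), T.F.map f ≫ τ b = τ a ≫ Kmap R L X f) →
        (∀ (v : V) (a : C),
          (A.act.obj v).map (τ a) ≫ cloneStr R L X X v a =
            (T.str v).app a ≫ τ ((A.act.obj v).obj a)) →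
        ∀ a : C, mOf R L T.F T.str (τ X ≫ cleval R L X) a = τ a)) ∧
    -- strong monad case: the above bijection restricts to Eilenberg–Moore
    -- algebras and strong monad morphisms
    (∀ (M : StrongMonad A) (s : M.F.obj X ⟶ X),
      IsEMAlgebra M s ↔
        ((∀ a : C, M.unit.app a ≫ mOf R L M.F M.str s a = ddUnit R L X a) ∧
         (∀ a : C, M.mul.app a ≫ mOf R L M.F M.str s a =
            mOf R L M.F M.str s (M.F.obj a) ≫
              Kmap R L X (mOf R L M.F M.str s a) ≫ ddMult R L X a))) := by
  constructor
  · intro T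
    refine ⟨fun s => ⟨fun {a b} f => mOf_natural R L T s f,
      fun v a => mOf_strong R L T s v a, mOf_cleval R L T s⟩,
      fun τ hnat hstr a => mOf_roundtrip R L T X τ (fun {a b} f => hnat f) hstr a⟩
  · intro M s
    constructor
    · intro hs
      exact ⟨fun a => mOf_unit R L M s hs.1 a, fun a => mOf_mul R L M s hs.2 a⟩
    · rintro ⟨h1, h2⟩
      constructor
      · calc M.unit.app X ≫ s
            = (M.unit.app X ≫ mOf R L M.F M.str s X) ≫ cleval R L X := by
              rw [Category.assoc, mOf_cleval]
          _ = ddUnit R L X X ≫ cleval R L X := by rw [h1 X]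
          _ = 𝟙 X := ddUnit_cleval R L X
      · have hident : mOf R L M.F M.str s (M.F.obj X) ≫
            Kmap R L X (mOf R L M.F M.str s X) ≫ ddMult R L X X =
            ((L.adj ((R.rhom X).obj X)).homEquiv (M.F.obj (M.F.obj X)) X)
              ((M.str ((R.rhom X).obj X)).app (M.F.obj X) ≫
                M.F.map ((M.str ((R.rhom X).obj X)).app X ≫ M.F.map (R.ev X X)) ≫
                M.F.map s ≫ s) := by
          apply ltr_uniq L _
          simp only [Functor.map_comp, Category.assoc]
          rw [mOf_mul_rhs]
          simp [Functor.map_comp]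
        have hyp : (A.act.map (((R.adj X).homEquiv (𝟙_ V) X) (A.lam.hom.app X))).app
              (M.F.obj X) ≫
            ((M.str ((R.rhom X).obj X)).app X ≫ M.F.map (R.ev X X)) =
            A.lam.hom.app (M.F.obj X) := by
          rw [reassoc_of% (M.str_natural (((R.adj X).homEquiv (𝟙_ V) X) (A.lam.hom.app X)) X),
            ← Functor.map_comp, rtr_ev, M.str_lam]
        calc M.mul.app X ≫ s
            = (M.mul.app X ≫ mOf R L M.F M.str s X) ≫ cleval R L X := by
              rw [Category.assoc, mOf_cleval]
          _ = (mOf R L M.F M.str s (M.F.obj X) ≫ Kmap R L X (mOf R L M.F M.str s X) ≫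
                ddMult R L X X) ≫ cleval R L X := by rw [h2 X]
          _ = M.F.map s ≫ s := by
              rw [hident, str_cleval R L M.toStrongEndo X _ _ hyp]

end MonEq
end

section
/- Let (F,φ) be a strong endofunctor on a left-closed V-action (C,⊳), and let A be a full subcategory of the category of F-algebras such that the forgetful functor A → C has a left adjoint sending X to an F-algebra (TX, τ_X : FTX → TX) in A, with unit η_X : X → TX. Suppose A is closed under the lifted left-hom endofunctors ⟦V,−⟧ (sending (X,s) to (⟦V,X⟧, s_V)) for all V ∈ V. Then for every (Y,t) ∈ A and every map f : V ⊳ X → Y in C there exists a unique map f# : V ⊳ TX → Y such that f# ∘ (V ⊳ η_X) = f and f# ∘ (V ⊳ τ_X) = t ∘ F(f#) ∘ φ_{V,TX}. -/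
open CategoryTheory MonoidalCategory Limits

universe w v₁ v₂ v₃ u₁ u₂ u₃

namespace MonEq

/-- **Parametrized induction for free algebras** (Theorem 4.?(1) of the paper).
Let `(F,φ)` be a strong endofunctor on a left-closed `V`-action and let `P`
describe a full subcategory of `F`-algebras that is closed under the lifted
left-hom endofunctors, and whose forgetful functor to `C` has a left adjoint
`X ↦ (T X, τ X)` with unit `η X`.  Then for every algebra `(Y,t)` in the
subcategory and every `f : v ⊳ X ⟶ Y` there is a unique extension
`f# : v ⊳ T X ⟶ Y` with `f# ∘ (v ⊳ η X) = f` and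
`f# ∘ (v ⊳ τ X) = t ∘ F f# ∘ φ`. -/
theorem unique_strong_extension
    {V : Type u₁} [Category.{v₁} V] [MonoidalCategory V]
    {C : Type u₂} [Category.{v₂} C]
    {A : MonAction V C} (L : LeftClosed A) (Fs : StrongEndo A)
    (P : ∀ X : C, (Fs.F.obj X ⟶ X) → Prop)
    (hP : ∀ (X : C) (s : Fs.F.obj X ⟶ X), P X s →
      ∀ v : V, P ((L.lhom v).obj X) (liftAlg L Fs.F Fs.str s v))
    (T : C → C) (τ : ∀ X : C, Fs.F.obj (T X) ⟶ T X) (η : ∀ X : C, X ⟶ T X)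
    (hτ : ∀ X : C, P (T X) (τ X))
    (universal : ∀ (X : C) {Y : C} (t : Fs.F.obj Y ⟶ Y), P Y t →
      ∀ f : X ⟶ Y, ∃! g : T X ⟶ Y, Fs.F.map g ≫ t = τ X ≫ g ∧ η X ≫ g = f) :
    ∀ {Y : C} (t : Fs.F.obj Y ⟶ Y), P Y t → ∀ (v : V) (X : C)
      (f : (A.act.obj v).obj X ⟶ Y),
      ∃! fs : (A.act.obj v).obj (T X) ⟶ Y,
        (A.act.obj v).map (η X) ≫ fs = f ∧
        (A.act.obj v).map (τ X) ≫ fs =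
          (Fs.str v).app (T X) ≫ Fs.F.map fs ≫ t := by
  intro Y t hY v X f
  have hlift : P ((L.lhom v).obj Y) (liftAlg L Fs.F Fs.str t v) := hP Y t hY v
  have hev : ∀ fs : (A.act.obj v).obj (T X) ⟶ Y,
      (A.act.obj v).map (((L.adj v).homEquiv _ _) fs) ≫
        (L.adj v).counit.app Y = fs := by
    intro fs
    exact ((L.adj v).homEquiv (T X) Y).symm_apply_apply fs
  have hlifteq : (A.act.obj v).map (liftAlg L Fs.F Fs.str t v) ≫
      (L.adj v).counit.app Y =
      (Fs.str v).app ((L.lhom v).obj Y) ≫ Fs.F.map (L.ev v Y) ≫ t :=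
    ((L.adj v).homEquiv _ Y).symm_apply_apply _
  have key : ∀ fs : (A.act.obj v).obj (T X) ⟶ Y,
      (((A.act.obj v).map (η X) ≫ fs = f) ∧
        ((A.act.obj v).map (τ X) ≫ fs =
          (Fs.str v).app (T X) ≫ Fs.F.map fs ≫ t)) ↔
      ((Fs.F.map (((L.adj v).homEquiv _ _) fs) ≫ liftAlg L Fs.F Fs.str t v =
          τ X ≫ ((L.adj v).homEquiv _ _) fs) ∧
        (η X ≫ ((L.adj v).homEquiv _ _) fs = ((L.adj v).homEquiv _ _) f)) := by
    intro fs
    have hnat := (Fs.str v).naturality (((L.adj v).homEquiv _ _) fs)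
    dsimp at hnat
    constructor
    · rintro ⟨h1, h2⟩
      constructor
      · rw [← Adjunction.homEquiv_naturality_left]
        unfold liftAlg
        rw [← Adjunction.homEquiv_naturality_left]
        congr 1
        rw [h2, ← Category.assoc, hnat, Category.assoc,
          ← Category.assoc (Fs.F.map _), ← Fs.F.map_comp]
        have := hev fs
        rw [LeftClosed.ev, this]
      · rw [← Adjunction.homEquiv_naturality_left, h1]
    · rintro ⟨h1, h2⟩
      constructor
      · have h := congrArg (((L.adj v).homEquiv X Y).symm) h2
        rw [Equiv.symm_apply_apply] at h
        rw [← h, (L.adj v).homEquiv_counit, Functor.map_comp, Category.assoc,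
          hev fs]
      · have h := (Adjunction.homEquiv_naturality_left (L.adj v)
          (τ X) fs).trans h1.symm
        have h' := congrArg (((L.adj v).homEquiv _ Y).symm) h
        rw [Equiv.symm_apply_apply] at h'
        rw [h', (L.adj v).homEquiv_counit, Functor.map_comp, Category.assoc,
          hlifteq, ← Category.assoc, hnat, Category.assoc,
          ← Category.assoc (Fs.F.map _), ← Fs.F.map_comp]
        have := hev fs
        rw [LeftClosed.ev, this]
  obtain ⟨g, hg, hguniq⟩ :=
    universal X (liftAlg L Fs.F Fs.str t v) hlift (((L.adj v).homEquiv X Y) f)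
  refine ⟨((L.adj v).homEquiv (T X) Y).symm g, ?_, ?_⟩
  · have h := (key (((L.adj v).homEquiv (T X) Y).symm g)).mpr
    rw [Equiv.apply_symm_apply] at h
    exact h hg
  · intro fs hfs
    have h := hguniq _ ((key fs).mp hfs)
    rw [← h, Equiv.symm_apply_apply]

end MonEq
end

section
/- Let (F,φ) be a strong endofunctor on a left-closed V-action (C,⊳), and let A be a full subcategory of the category of F-algebras, closed under the lifted left-hom endofunctors ⟦V,−⟧ for all V ∈ V, such that the forgetful functor A → C has a left adjoint sending X to (TX, τ_X : FTX → TX) ∈ A. Then the monad T = (T,η,μ) induced by this adjunction is canonically a strong monad: there is a unique natural transformation φ̂_{V,C} : V ⊳ TC → T(V ⊳ C) satisfying φ̂_{V,C} ∘ (V ⊳ η_C) = η_{V⊳C} and φ̂_{V,C} ∘ (V ⊳ τ_C) = τ_{V⊳C} ∘ F(φ̂_{V,C}) ∘ φ_{V,TC}, and φ̂ is a strength making (T,φ̂,η,μ) a strong monad. -/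
open CategoryTheory MonoidalCategory Limits

universe w v₁ v₂ v₃ u₁ u₂ u₃

namespace MonEq

section Aux

variable {V : Type u₁} [Category.{v₁} V] [MonoidalCategory V]
variable {C : Type u₂} [Category.{v₂} C]
variable {A : MonAction V C}

/-- Transposing the algebra-homomorphism condition across the adjunction. -/
lemma symm_hom_iff (L : LeftClosed A) (Fs : StrongEndo A) (v : V) {X Y : C}
    (tX : Fs.F.obj X ⟶ X) (s : Fs.F.obj Y ⟶ Y) (g : X ⟶ (L.lhom v).obj Y) :
    Fs.F.map g ≫ liftAlg L Fs.F Fs.str s v = tX ≫ g ↔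
      (A.act.obj v).map tX ≫ ((L.adj v).homEquiv X Y).symm g =
        (Fs.str v).app X ≫ Fs.F.map (((L.adj v).homEquiv X Y).symm g) ≫ s := by
  rw [← Equiv.apply_eq_iff_eq ((L.adj v).homEquiv (Fs.F.obj X) Y).symm]
  have h1 : ((L.adj v).homEquiv (Fs.F.obj X) Y).symm
        (Fs.F.map g ≫ liftAlg L Fs.F Fs.str s v)
      = (Fs.str v).app X ≫ Fs.F.map (((L.adj v).homEquiv X Y).symm g) ≫ s := by
    rw [Adjunction.homEquiv_naturality_left_symm, liftAlg, Equiv.symm_apply_apply,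
      Adjunction.homEquiv_counit]
    have hn := (Fs.str v).naturality g
    simp only [Functor.comp_map] at hn
    rw [← Category.assoc, hn]
    simp [LeftClosed.ev, Functor.map_comp, Category.assoc]
  have h2 : ((L.adj v).homEquiv (Fs.F.obj X) Y).symm (tX ≫ g)
      = (A.act.obj v).map tX ≫ ((L.adj v).homEquiv X Y).symm g :=
    Adjunction.homEquiv_naturality_left_symm _ _ _
  rw [h1, h2]
  exact eq_comm

/-- Transposing the unit condition across the adjunction. -/
lemma symm_unit_iff (L : LeftClosed A) (v : V) {X X' Y : C}
    (e : X ⟶ X') (h : (A.act.obj v).obj X ⟶ Y) (g : X' ⟶ (L.lhom v).obj Y) :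
    e ≫ g = ((L.adj v).homEquiv X Y) h ↔
      (A.act.obj v).map e ≫ ((L.adj v).homEquiv X' Y).symm g = h := by
  rw [← Equiv.apply_eq_iff_eq ((L.adj v).homEquiv X Y).symm,
    Adjunction.homEquiv_naturality_left_symm, Equiv.symm_apply_apply]

/-- Uniqueness of maps `v ⊳ T X ⟶ Y` characterized by homomorphism and unit
conditions, via transposition to the universal property of `T X`. -/
lemma uniq_ext (L : LeftClosed A) (Fs : StrongEndo A)
    (P : ∀ X : C, (Fs.F.obj X ⟶ X) → Prop)
    (hP : ∀ (X : C) (s : Fs.F.obj X ⟶ X), P X s →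
      ∀ v : V, P ((L.lhom v).obj X) (liftAlg L Fs.F Fs.str s v))
    (T : C ⥤ C) (τ : ∀ X : C, Fs.F.obj (T.obj X) ⟶ T.obj X)
    (η : 𝟭 C ⟶ T)
    (universal : ∀ (X : C) {Y : C} (t : Fs.F.obj Y ⟶ Y), P Y t →
      ∀ f : X ⟶ Y, ∃! g : T.obj X ⟶ Y,
        Fs.F.map g ≫ t = τ X ≫ g ∧ η.app X ≫ g = f)
    (v : V) (X : C) {Y : C} (s : Fs.F.obj Y ⟶ Y) (hs : P Y s)
    (h : (A.act.obj v).obj X ⟶ Y)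
    (g₁ g₂ : (A.act.obj v).obj (T.obj X) ⟶ Y)
    (hom₁ : (A.act.obj v).map (τ X) ≫ g₁ =
      (Fs.str v).app (T.obj X) ≫ Fs.F.map g₁ ≫ s)
    (unit₁ : (A.act.obj v).map (η.app X) ≫ g₁ = h)
    (hom₂ : (A.act.obj v).map (τ X) ≫ g₂ =
      (Fs.str v).app (T.obj X) ≫ Fs.F.map g₂ ≫ s)
    (unit₂ : (A.act.obj v).map (η.app X) ≫ g₂ = h) : g₁ = g₂ := by
  have key : ∀ g : (A.act.obj v).obj (T.obj X) ⟶ Y,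
      (A.act.obj v).map (τ X) ≫ g = (Fs.str v).app (T.obj X) ≫ Fs.F.map g ≫ s →
      (A.act.obj v).map (η.app X) ≫ g = h →
      Fs.F.map (((L.adj v).homEquiv (T.obj X) Y) g) ≫ liftAlg L Fs.F Fs.str s v
          = τ X ≫ ((L.adj v).homEquiv (T.obj X) Y) g ∧
        η.app X ≫ ((L.adj v).homEquiv (T.obj X) Y) g = ((L.adj v).homEquiv X Y) h := by
    intro g hg hu
    constructor
    · rw [symm_hom_iff L Fs v (τ X) s, Equiv.symm_apply_apply]; exact hg
    · exact (symm_unit_iff L v (η.app X) h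
        (((L.adj v).homEquiv (T.obj X) Y) g)).mpr
        (by rw [Equiv.symm_apply_apply]; exact hu)
  have hu := universal X (liftAlg L Fs.F Fs.str s v) (hP Y s hs v)
    (((L.adj v).homEquiv X Y) h)
  exact ((L.adj v).homEquiv (T.obj X) Y).injective
    (hu.unique (key g₁ hom₁ unit₁) (key g₂ hom₂ unit₂))

end Aux


/-- **Strength on the induced monad** (Theorem 4.?(2) of the paper).
Under the hypotheses of the parametrized-induction theorem, the monad
`(T,η,μ)` induced by the adjunction becomes a strong monad: there is a unique
family `φ̂_{v,X} : v ⊳ T X ⟶ T (v ⊳ X)` such that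
`φ̂ ∘ (v ⊳ η) = η` and `φ̂ ∘ (v ⊳ τ) = τ ∘ F φ̂ ∘ φ`, and any such family is a
strength for which `(T,φ̂,η,μ)` is a strong monad. -/
theorem induced_monad_is_strong
    {V : Type u₁} [Category.{v₁} V] [MonoidalCategory V]
    {C : Type u₂} [Category.{v₂} C]
    {A : MonAction V C} (L : LeftClosed A) (Fs : StrongEndo A)
    (P : ∀ X : C, (Fs.F.obj X ⟶ X) → Prop)
    (hP : ∀ (X : C) (s : Fs.F.obj X ⟶ X), P X s →
      ∀ v : V, P ((L.lhom v).obj X) (liftAlg L Fs.F Fs.str s v))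
    -- the monad `(T,η,μ)` induced by the adjunction
    (T : C ⥤ C) (τ : ∀ X : C, Fs.F.obj (T.obj X) ⟶ T.obj X)
    (η : 𝟭 C ⟶ T) (μ : T ⋙ T ⟶ T)
    (hτ : ∀ X : C, P (T.obj X) (τ X))
    (hτnat : ∀ {X Y : C} (f : X ⟶ Y),
      Fs.F.map (T.map f) ≫ τ Y = τ X ≫ T.map f)
    (universal : ∀ (X : C) {Y : C} (t : Fs.F.obj Y ⟶ Y), P Y t →
      ∀ f : X ⟶ Y, ∃! g : T.obj X ⟶ Y,
        Fs.F.map g ≫ t = τ X ≫ g ∧ η.app X ≫ g = f)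
    -- `μ_X` is the unique homomorphic extension of the identity on `T X`
    (hμ_ext : ∀ X : C, η.app (T.obj X) ≫ μ.app X = 𝟙 (T.obj X))
    (hμ_hom : ∀ X : C, Fs.F.map (μ.app X) ≫ τ X = τ (T.obj X) ≫ μ.app X)
    -- monad laws of the induced monad
    (h_left : ∀ X : C, η.app (T.obj X) ≫ μ.app X = 𝟙 (T.obj X))
    (h_right : ∀ X : C, T.map (η.app X) ≫ μ.app X = 𝟙 (T.obj X))
    (h_assoc : ∀ X : C, T.map (μ.app X) ≫ μ.app X = μ.app (T.obj X) ≫ μ.app X) :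
    -- there is a unique family satisfying the two characterizing diagrams
    (∃! φh : ∀ (v : V) (X : C),
        (A.act.obj v).obj (T.obj X) ⟶ T.obj ((A.act.obj v).obj X),
      (∀ (v : V) (X : C),
        (A.act.obj v).map (η.app X) ≫ φh v X = η.app ((A.act.obj v).obj X)) ∧
      (∀ (v : V) (X : C),
        (A.act.obj v).map (τ X) ≫ φh v X =
          (Fs.str v).app (T.obj X) ≫ Fs.F.map (φh v X) ≫ τ ((A.act.obj v).obj X))) ∧
    -- and any such family is a strength making `(T,η,μ)` a strong monad
    (∀ φh : ∀ (v : V) (X : C),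
        (A.act.obj v).obj (T.obj X) ⟶ T.obj ((A.act.obj v).obj X),
      ((∀ (v : V) (X : C),
        (A.act.obj v).map (η.app X) ≫ φh v X = η.app ((A.act.obj v).obj X)) ∧
       (∀ (v : V) (X : C),
        (A.act.obj v).map (τ X) ≫ φh v X =
          (Fs.str v).app (T.obj X) ≫ Fs.F.map (φh v X) ≫ τ ((A.act.obj v).obj X))) →
      -- naturality in `X`
      (∀ (v : V) {X Y : C} (f : X ⟶ Y),
        (A.act.obj v).map (T.map f) ≫ φh v Y = φh v X ≫ T.map ((A.act.obj v).map f)) ∧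
      -- naturality in `v`
      (∀ {v w : V} (h : v ⟶ w) (X : C),
        (A.act.map h).app (T.obj X) ≫ φh w X = φh v X ≫ T.map ((A.act.map h).app X)) ∧
      -- coherence with the unitor of the action
      (∀ X : C,
        φh (𝟙_ V) X ≫ T.map (A.lam.hom.app X) = A.lam.hom.app (T.obj X)) ∧
      -- coherence with the associator of the action
      (∀ (u v : V) (X : C),
        φh (u ⊗ v) X ≫ T.map ((A.assoc u v).hom.app X) =
          (A.assoc u v).hom.app (T.obj X) ≫ (A.act.obj u).map (φh v X) ≫
            φh u ((A.act.obj v).obj X)) ∧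
      -- compatibility with the monad unit
      (∀ (v : V) (X : C),
        (A.act.obj v).map (η.app X) ≫ φh v X = η.app ((A.act.obj v).obj X)) ∧
      -- compatibility with the monad multiplication
      (∀ (v : V) (X : C),
        φh v (T.obj X) ≫ T.map (φh v X) ≫ μ.app ((A.act.obj v).obj X) =
          (A.act.obj v).map (μ.app X) ≫ φh v X)) := by
  classical
  have exu : ∀ (v : V) (X : C),
      ∃! g : T.obj X ⟶ (L.lhom v).obj (T.obj ((A.act.obj v).obj X)),
        Fs.F.map g ≫ liftAlg L Fs.F Fs.str (τ ((A.act.obj v).obj X)) v = τ X ≫ g ∧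
        η.app X ≫ g = ((L.adj v).homEquiv X (T.obj ((A.act.obj v).obj X)))
          (η.app ((A.act.obj v).obj X)) :=
    fun v X => universal X (liftAlg L Fs.F Fs.str (τ ((A.act.obj v).obj X)) v)
      (hP _ _ (hτ _) v) _
  let φ0 : ∀ (v : V) (X : C),
      (A.act.obj v).obj (T.obj X) ⟶ T.obj ((A.act.obj v).obj X) :=
    fun v X => ((L.adj v).homEquiv (T.obj X) (T.obj ((A.act.obj v).obj X))).symm
      (exu v X).choose
  have φ0_unit : ∀ (v : V) (X : C),
      (A.act.obj v).map (η.app X) ≫ φ0 v X = η.app ((A.act.obj v).obj X) :=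
    fun v X => (symm_unit_iff L v (η.app X) _ _).mp (exu v X).choose_spec.1.2
  have φ0_hom : ∀ (v : V) (X : C),
      (A.act.obj v).map (τ X) ≫ φ0 v X =
        (Fs.str v).app (T.obj X) ≫ Fs.F.map (φ0 v X) ≫ τ ((A.act.obj v).obj X) :=
    fun v X => (symm_hom_iff L Fs v (τ X) _ _).mp (exu v X).choose_spec.1.1
  have ηnat : ∀ {X Y : C} (f : X ⟶ Y), η.app X ≫ T.map f = f ≫ η.app Y := by
    intro X Y f; simpa using (η.naturality f).symm
  have strnat : ∀ (v : V) {X Y : C} (f : X ⟶ Y),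
      (A.act.obj v).map (Fs.F.map f) ≫ (Fs.str v).app Y =
        (Fs.str v).app X ≫ Fs.F.map ((A.act.obj v).map f) := by
    intro v X Y f; simpa using (Fs.str v).naturality f
  constructor
  · refine ⟨φ0, ⟨φ0_unit, φ0_hom⟩, ?_⟩
    rintro φh ⟨hη', hτ'⟩
    funext v X
    exact uniq_ext L Fs P hP T τ η universal v X (τ ((A.act.obj v).obj X)) (hτ _)
      (η.app ((A.act.obj v).obj X)) (φh v X) (φ0 v X) (hτ' v X) (hη' v X)
      (φ0_hom v X) (φ0_unit v X)
  · rintro φh ⟨hη', hτ'⟩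
    refine ⟨?_, ?_, ?_, ?_, hη', ?_⟩
    · -- naturality in X
      intro v X Y f
      have hom1 : (A.act.obj v).map (τ X) ≫
            ((A.act.obj v).map (T.map f) ≫ φh v Y) =
          (Fs.str v).app (T.obj X) ≫
            Fs.F.map ((A.act.obj v).map (T.map f) ≫ φh v Y) ≫
              τ ((A.act.obj v).obj Y) := by
        simp only [Functor.map_comp, Category.assoc]
        rw [← Functor.map_comp_assoc, ← hτnat f, Functor.map_comp_assoc,
          hτ' v Y, reassoc_of% (strnat v (T.map f))]
      have unit1 : (A.act.obj v).map (η.app X) ≫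
            ((A.act.obj v).map (T.map f) ≫ φh v Y) =
          (A.act.obj v).map f ≫ η.app ((A.act.obj v).obj Y) := by
        rw [← Functor.map_comp_assoc, ηnat f, Functor.map_comp_assoc, hη' v Y]
      have hom2 : (A.act.obj v).map (τ X) ≫
            (φh v X ≫ T.map ((A.act.obj v).map f)) =
          (Fs.str v).app (T.obj X) ≫
            Fs.F.map (φh v X ≫ T.map ((A.act.obj v).map f)) ≫
              τ ((A.act.obj v).obj Y) := by
        simp only [Functor.map_comp, Category.assoc]
        rw [reassoc_of% (hτ' v X), ← hτnat ((A.act.obj v).map f)]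
      have unit2 : (A.act.obj v).map (η.app X) ≫
            (φh v X ≫ T.map ((A.act.obj v).map f)) =
          (A.act.obj v).map f ≫ η.app ((A.act.obj v).obj Y) := by
        rw [reassoc_of% (hη' v X), ηnat]
      exact uniq_ext L Fs P hP T τ η universal v X (τ ((A.act.obj v).obj Y))
        (hτ _) ((A.act.obj v).map f ≫ η.app ((A.act.obj v).obj Y))
        _ _ hom1 unit1 hom2 unit2
    · -- naturality in v
      intro v w h X
      have hom1 : (A.act.obj v).map (τ X) ≫
            ((A.act.map h).app (T.obj X) ≫ φh w X) =
          (Fs.str v).app (T.obj X) ≫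
            Fs.F.map ((A.act.map h).app (T.obj X) ≫ φh w X) ≫
              τ ((A.act.obj w).obj X) := by
        simp only [Functor.map_comp, Category.assoc]
        rw [reassoc_of% ((A.act.map h).naturality (τ X)),
          hτ' w X, reassoc_of% (Fs.str_natural h (T.obj X))]
      have unit1 : (A.act.obj v).map (η.app X) ≫
            ((A.act.map h).app (T.obj X) ≫ φh w X) =
          (A.act.map h).app X ≫ η.app ((A.act.obj w).obj X) := by
        rw [reassoc_of% ((A.act.map h).naturality (η.app X)), hη' w X]
      have hom2 : (A.act.obj v).map (τ X) ≫
            (φh v X ≫ T.map ((A.act.map h).app X)) =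
          (Fs.str v).app (T.obj X) ≫
            Fs.F.map (φh v X ≫ T.map ((A.act.map h).app X)) ≫
              τ ((A.act.obj w).obj X) := by
        simp only [Functor.map_comp, Category.assoc]
        rw [reassoc_of% (hτ' v X), ← hτnat ((A.act.map h).app X)]
      have unit2 : (A.act.obj v).map (η.app X) ≫
            (φh v X ≫ T.map ((A.act.map h).app X)) =
          (A.act.map h).app X ≫ η.app ((A.act.obj w).obj X) := by
        rw [reassoc_of% (hη' v X), ηnat]
      exact uniq_ext L Fs P hP T τ η universal v X (τ ((A.act.obj w).obj X))
        (hτ _) ((A.act.map h).app X ≫ η.app ((A.act.obj w).obj X))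
        _ _ hom1 unit1 hom2 unit2
    · -- unitor coherence
      intro X
      have hom1 : (A.act.obj (𝟙_ V)).map (τ X) ≫
            (φh (𝟙_ V) X ≫ T.map (A.lam.hom.app X)) =
          (Fs.str (𝟙_ V)).app (T.obj X) ≫
            Fs.F.map (φh (𝟙_ V) X ≫ T.map (A.lam.hom.app X)) ≫ τ X := by
        simp only [Functor.map_comp, Category.assoc]
        rw [reassoc_of% (hτ' (𝟙_ V) X), ← hτnat (A.lam.hom.app X)]
        simp only [Functor.id_obj]
      have unit1 : (A.act.obj (𝟙_ V)).map (η.app X) ≫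
            (φh (𝟙_ V) X ≫ T.map (A.lam.hom.app X)) =
          A.lam.hom.app X ≫ η.app X := by
        rw [reassoc_of% (hη' (𝟙_ V) X), ηnat]
        simp only [Functor.id_obj]
      have hom2 : (A.act.obj (𝟙_ V)).map (τ X) ≫ A.lam.hom.app (T.obj X) =
          (Fs.str (𝟙_ V)).app (T.obj X) ≫
            Fs.F.map (A.lam.hom.app (T.obj X)) ≫ τ X := by
        rw [← Category.assoc, Fs.str_lam (T.obj X)]
        simpa using A.lam.hom.naturality (τ X)
      have unit2 : (A.act.obj (𝟙_ V)).map (η.app X) ≫ A.lam.hom.app (T.obj X) =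
          A.lam.hom.app X ≫ η.app X := by
        simpa using A.lam.hom.naturality (η.app X)
      exact uniq_ext L Fs P hP T τ η universal (𝟙_ V) X (τ X) (hτ X)
        (A.lam.hom.app X ≫ η.app X) _ _ hom1 unit1 hom2 unit2
    · -- associator coherence
      intro u v X
      have hom1 : (A.act.obj (u ⊗ v)).map (τ X) ≫
            (φh (u ⊗ v) X ≫ T.map ((A.assoc u v).hom.app X)) =
          (Fs.str (u ⊗ v)).app (T.obj X) ≫
            Fs.F.map (φh (u ⊗ v) X ≫ T.map ((A.assoc u v).hom.app X)) ≫
              τ ((A.act.obj u).obj ((A.act.obj v).obj X)) := by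
        simp only [Functor.map_comp, Category.assoc]
        rw [reassoc_of% (hτ' (u ⊗ v) X), ← hτnat ((A.assoc u v).hom.app X)]
        simp only [Functor.comp_obj]
      have unit1 : (A.act.obj (u ⊗ v)).map (η.app X) ≫
            (φh (u ⊗ v) X ≫ T.map ((A.assoc u v).hom.app X)) =
          (A.assoc u v).hom.app X ≫
            η.app ((A.act.obj u).obj ((A.act.obj v).obj X)) := by
        rw [reassoc_of% (hη' (u ⊗ v) X), ηnat]
        simp only [Functor.comp_obj]
      have hom2 : (A.act.obj (u ⊗ v)).map (τ X) ≫
            ((A.assoc u v).hom.app (T.obj X) ≫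
              (A.act.obj u).map (φh v X) ≫ φh u ((A.act.obj v).obj X)) =
          (Fs.str (u ⊗ v)).app (T.obj X) ≫
            Fs.F.map ((A.assoc u v).hom.app (T.obj X) ≫
              (A.act.obj u).map (φh v X) ≫ φh u ((A.act.obj v).obj X)) ≫
              τ ((A.act.obj u).obj ((A.act.obj v).obj X)) := by
        simp only [Functor.map_comp, Category.assoc]
        rw [reassoc_of% ((A.assoc u v).hom.naturality (τ X))]
        simp only [Functor.comp_map, Functor.comp_obj]
        rw [← Functor.map_comp_assoc, hτ' v X]
        simp only [Functor.map_comp, Category.assoc]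
        rw [hτ' u ((A.act.obj v).obj X), reassoc_of% (strnat u (φh v X)),
          ← reassoc_of% (Fs.str_assoc u v (T.obj X))]
      have unit2 : (A.act.obj (u ⊗ v)).map (η.app X) ≫
            ((A.assoc u v).hom.app (T.obj X) ≫
              (A.act.obj u).map (φh v X) ≫ φh u ((A.act.obj v).obj X)) =
          (A.assoc u v).hom.app X ≫
            η.app ((A.act.obj u).obj ((A.act.obj v).obj X)) := by
        rw [reassoc_of% ((A.assoc u v).hom.naturality (η.app X))]
        simp only [Functor.comp_map, Functor.comp_obj]
        rw [← Functor.map_comp_assoc, hη' v X, hη' u ((A.act.obj v).obj X)]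
      exact uniq_ext L Fs P hP T τ η universal (u ⊗ v) X
        (τ ((A.act.obj u).obj ((A.act.obj v).obj X))) (hτ _)
        ((A.assoc u v).hom.app X ≫
          η.app ((A.act.obj u).obj ((A.act.obj v).obj X)))
        _ _ hom1 unit1 hom2 unit2
    · -- multiplication compatibility
      intro v X
      have hom1 : (A.act.obj v).map (τ (T.obj X)) ≫
            (φh v (T.obj X) ≫ T.map (φh v X) ≫ μ.app ((A.act.obj v).obj X)) =
          (Fs.str v).app (T.obj (T.obj X)) ≫
            Fs.F.map (φh v (T.obj X) ≫ T.map (φh v X) ≫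
              μ.app ((A.act.obj v).obj X)) ≫ τ ((A.act.obj v).obj X) := by
        simp only [Functor.map_comp, Category.assoc]
        rw [reassoc_of% (hτ' v (T.obj X)),
          ← reassoc_of% (hτnat (φh v X)), ← hμ_hom ((A.act.obj v).obj X)]
      have unit1 : (A.act.obj v).map (η.app (T.obj X)) ≫
            (φh v (T.obj X) ≫ T.map (φh v X) ≫ μ.app ((A.act.obj v).obj X)) =
          φh v X := by
        rw [reassoc_of% (hη' v (T.obj X)), reassoc_of% (ηnat (φh v X)),
          h_left ((A.act.obj v).obj X), Category.comp_id]
      have hom2 : (A.act.obj v).map (τ (T.obj X)) ≫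
            ((A.act.obj v).map (μ.app X) ≫ φh v X) =
          (Fs.str v).app (T.obj (T.obj X)) ≫
            Fs.F.map ((A.act.obj v).map (μ.app X) ≫ φh v X) ≫
              τ ((A.act.obj v).obj X) := by
        simp only [Functor.map_comp, Category.assoc]
        rw [← Functor.map_comp_assoc, ← hμ_hom X, Functor.map_comp_assoc,
          hτ' v X, reassoc_of% (strnat v (μ.app X))]
      have unit2 : (A.act.obj v).map (η.app (T.obj X)) ≫
            ((A.act.obj v).map (μ.app X) ≫ φh v X) =
          φh v X := by
        rw [← Functor.map_comp_assoc, h_left X]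
        simp
      exact uniq_ext L Fs P hP T τ η universal v (T.obj X)
        (τ ((A.act.obj v).obj X)) (hτ _) (φh v X) _ _ hom1 unit1 hom2 unit2

end MonEq
end
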